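/- arXiv:1612.00142 — 8 statements merged into one kernel-verified Lean document; each statement's English description precedes it below -/
import Mathlib

section
/- Let Q0 := {x ∈ ℝⁿ : g_j(x) ≤ 0 for all j = 1,…,m}, let x⁰ ∈ Q0 and u ∈ ℝⁿ. Suppose that for each i ∈ {1,…,l} there exists vⁱ ∈ ℝⁿ such that ⟨∇f_i(x⁰), vⁱ⟩ + f_i°°(x⁰; u, u) < 0 and ⟨∇g_j(x⁰), vⁱ⟩ + g_j°°(x⁰; u, u) < 0 for all j ∈ J(x⁰; u). Then the generalized Abadie second-order regularity condition holds at x⁰ for the direction u, i.e. L²(Q; x⁰, u) ⊆ ∩_{i=1}^l T²(Mⁱ; x⁰, u). -/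
open Filter Topology Set
open scoped InnerProductSpace

noncomputable section

/-- A function is `C^{1,1}` iff it is Fréchet differentiable with locally Lipschitz
gradient. -/
def IsC11 {n : ℕ} (φ : EuclideanSpace ℝ (Fin n) → ℝ) : Prop :=
  Differentiable ℝ φ ∧ LocallyLipschitz (gradient φ)

/-- `φ°°(x⁰; u, u) = limsup_{x → x⁰, t ↓ 0} (⟨∇φ(x + t u), u⟩ − ⟨∇φ(x), u⟩)/t`. -/
def secondDD {n : ℕ} (φ : EuclideanSpace ℝ (Fin n) → ℝ)
    (x0 u : EuclideanSpace ℝ (Fin n)) : ℝ :=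
  Filter.limsup
    (fun p : EuclideanSpace ℝ (Fin n) × ℝ =>
      (⟪gradient φ (p.1 + p.2 • u), u⟫_ℝ - ⟪gradient φ p.1, u⟫_ℝ) / p.2)
    ((𝓝 x0) ×ˢ (𝓝[>] (0 : ℝ)))

/-- The second-order tangent set `T²(C; x⁰, u)`. -/
def tcone2 {n : ℕ} (C : Set (EuclideanSpace ℝ (Fin n)))
    (x0 u : EuclideanSpace ℝ (Fin n)) : Set (EuclideanSpace ℝ (Fin n)) :=
  {v | ∃ t : ℕ → ℝ, ∃ vk : ℕ → EuclideanSpace ℝ (Fin n),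
    (∀ k, 0 < t k) ∧ Tendsto t atTop (𝓝 0) ∧ Tendsto vk atTop (𝓝 v) ∧
    ∀ k, x0 + t k • u + ((1 / 2) * (t k) ^ 2) • vk k ∈ C}

/-- `(a₁, a₂) ≦_lex (0, 0)`. -/
def lexLE (a : ℝ × ℝ) : Prop := a.1 < 0 ∨ (a.1 = 0 ∧ a.2 ≤ 0)

/-- The second-order linearizing set `L²(Q; x⁰, u)`. -/
def L2lin {n l m : ℕ} (f : Fin l → EuclideanSpace ℝ (Fin n) → ℝ)
    (g : Fin m → EuclideanSpace ℝ (Fin n) → ℝ)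
    (x0 u : EuclideanSpace ℝ (Fin n)) : Set (EuclideanSpace ℝ (Fin n)) :=
  {v | (∀ i, lexLE (⟪gradient (f i) x0, u⟫_ℝ,
          ⟪gradient (f i) x0, v⟫_ℝ + secondDD (f i) x0 u)) ∧
       (∀ j, g j x0 = 0 → lexLE (⟪gradient (g j) x0, u⟫_ℝ,
          ⟪gradient (g j) x0, v⟫_ℝ + secondDD (g j) x0 u))}

lemma inner_grad (φ : EuclideanSpace ℝ (Fin n) → ℝ) (x u : EuclideanSpace ℝ (Fin n)) :
    ⟪gradient φ x, u⟫_ℝ = fderiv ℝ φ x u := by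
  rw [gradient]; exact InnerProductSpace.toDual_symm_apply

lemma hasDerivAt_comp_line (φ : EuclideanSpace ℝ (Fin n) → ℝ) (hφ : Differentiable ℝ φ)
    (x0 u : EuclideanSpace ℝ (Fin n)) (t : ℝ) :
    HasDerivAt (fun s : ℝ => φ (x0 + s • u)) (⟪gradient φ (x0 + t • u), u⟫_ℝ) t := by
  have h1 : HasDerivAt (fun s : ℝ => x0 + s • u) u t := by
    simpa using ((hasDerivAt_id t).smul_const u).const_add x0
  have h2 := (hφ (x0 + t • u)).hasFDerivAt.comp_hasDerivAt t h1
  rw [inner_grad]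
  exact h2

lemma fderiv_norm_eq_grad (φ : EuclideanSpace ℝ (Fin n) → ℝ) (x y : EuclideanSpace ℝ (Fin n)) :
    ‖fderiv ℝ φ x - fderiv ℝ φ y‖ = ‖gradient φ x - gradient φ y‖ := by
  rw [gradient, gradient, ← map_sub, LinearIsometryEquiv.norm_map]

set_option maxHeartbeats 2000000 in
lemma taylor_upper (φ : EuclideanSpace ℝ (Fin n) → ℝ) (hφ : IsC11 φ)
    (x0 u w : EuclideanSpace ℝ (Fin n)) {ε : ℝ} (hε : 0 < ε) :
    ∀ᶠ t in 𝓝[>] (0:ℝ),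
      φ (x0 + t • u + ((1/2) * t^2) • w) ≤
        φ x0 + t * ⟪gradient φ x0, u⟫_ℝ
          + (1/2) * t^2 * (⟪gradient φ x0, w⟫_ℝ + secondDD φ x0 u + ε) := by
  obtain ⟨hdiff, hlip⟩ := hφ
  set L := secondDD φ x0 u with hL
  -- boundedness of the difference quotient near (x0, 0+)
  obtain ⟨K, s, hs, hK⟩ := hlip x0
  obtain ⟨r, hr, hball⟩ := Metric.mem_nhds_iff.1 hs
  have hev_mem : ∀ᶠ p : EuclideanSpace ℝ (Fin n) × ℝ in (𝓝 x0) ×ˢ (𝓝[>] (0:ℝ)),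
      p.1 ∈ Metric.ball x0 (r/2) ∧ (0 < p.2 ∧ p.2 < (r/2)/(‖u‖+1)) := by
    have ha : ∀ᶠ x in 𝓝 x0, x ∈ Metric.ball x0 (r/2) :=
      Metric.ball_mem_nhds _ (by positivity)
    have hb : ∀ᶠ t in 𝓝[>] (0:ℝ), 0 < t ∧ t < (r/2)/(‖u‖+1) := by
      have h1 : ∀ᶠ t in 𝓝[>] (0:ℝ), 0 < t := self_mem_nhdsWithin
      have h2 : ∀ᶠ t in 𝓝[>] (0:ℝ), t < (r/2)/(‖u‖+1) :=
        (gt_mem_nhds (by positivity)).filter_mono nhdsWithin_le_nhds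
      exact h1.and h2
    exact (ha.prod_inl _).and (hb.prod_inr _)
  have hbound : IsBoundedUnder (· ≤ ·) ((𝓝 x0) ×ˢ (𝓝[>] (0:ℝ)))
      (fun p : EuclideanSpace ℝ (Fin n) × ℝ =>
        (⟪gradient φ (p.1 + p.2 • u), u⟫_ℝ - ⟪gradient φ p.1, u⟫_ℝ) / p.2) := by
    refine ⟨(K : ℝ) * ‖u‖^2, ?_⟩
    rw [Filter.eventually_map]
    filter_upwards [hev_mem] with p hp
    obtain ⟨hp1, hp2, hp3⟩ := hp
    have hx1 : p.1 ∈ s := hball (Metric.ball_subset_ball (by linarith) hp1)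
    have hx2 : p.1 + p.2 • u ∈ s := by
      apply hball
      rw [Metric.mem_ball, dist_eq_norm]
      have h1 : ‖p.1 + p.2 • u - x0‖ ≤ ‖p.1 - x0‖ + ‖p.2 • u‖ := by
        have : p.1 + p.2 • u - x0 = (p.1 - x0) + p.2 • u := by abel
        rw [this]; exact norm_add_le _ _
      have h2 : ‖p.1 - x0‖ < r/2 := by
        rw [Metric.mem_ball, dist_eq_norm] at hp1; exact hp1
      have h3 : ‖p.2 • u‖ ≤ r/2 := by
        rw [norm_smul, Real.norm_eq_abs, abs_of_pos hp2]
        have h4 : p.2 * ‖u‖ < ((r/2)/(‖u‖+1)) * (‖u‖+1) := by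
          have := norm_nonneg u
          nlinarith
        rw [div_mul_cancel₀] at h4
        · linarith
        · positivity
      linarith
    have hd : ‖gradient φ (p.1 + p.2 • u) - gradient φ p.1‖ ≤ K * (p.2 * ‖u‖) := by
      have := hK.dist_le_mul _ hx2 _ hx1
      rw [dist_eq_norm, dist_eq_norm] at this
      have h5 : p.1 + p.2 • u - p.1 = p.2 • u := by abel
      rw [h5, norm_smul, Real.norm_eq_abs, abs_of_pos hp2] at this
      exact this
    have hinner : ⟪gradient φ (p.1 + p.2 • u), u⟫_ℝ - ⟪gradient φ p.1, u⟫_ℝ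
        ≤ (K * ‖u‖^2) * p.2 := by
      rw [← inner_sub_left]
      calc ⟪gradient φ (p.1 + p.2 • u) - gradient φ p.1, u⟫_ℝ
          ≤ ‖gradient φ (p.1 + p.2 • u) - gradient φ p.1‖ * ‖u‖ := real_inner_le_norm _ _
        _ ≤ (K * (p.2 * ‖u‖)) * ‖u‖ := by
            apply mul_le_mul_of_nonneg_right hd (norm_nonneg u)
        _ = (K * ‖u‖^2) * p.2 := by ring
    rw [div_le_iff₀ hp2]
    exact hinner
  have hev : ∀ᶠ p : EuclideanSpace ℝ (Fin n) × ℝ in (𝓝 x0) ×ˢ (𝓝[>] (0:ℝ)),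
      (⟪gradient φ (p.1 + p.2 • u), u⟫_ℝ - ⟪gradient φ p.1, u⟫_ℝ) / p.2 < L + ε/2 := by
    have hls : Filter.limsup
        (fun p : EuclideanSpace ℝ (Fin n) × ℝ =>
          (⟪gradient φ (p.1 + p.2 • u), u⟫_ℝ - ⟪gradient φ p.1, u⟫_ℝ) / p.2)
        ((𝓝 x0) ×ˢ (𝓝[>] (0:ℝ))) = L := by rw [hL, secondDD]
    exact Filter.eventually_lt_of_limsup_lt (by rw [hls]; linarith) hbound
  -- specialize to x = x0
  have hev2 : ∀ᶠ t in 𝓝[>] (0:ℝ),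
      ⟪gradient φ (x0 + t • u), u⟫_ℝ ≤ ⟪gradient φ x0, u⟫_ℝ + t * (L + ε/2) := by
    rw [Filter.eventually_prod_iff] at hev
    obtain ⟨pa, hpa, pb, hpb, h⟩ := hev
    have hx0pa : pa x0 := hpa.self_of_nhds
    filter_upwards [hpb, self_mem_nhdsWithin] with t hpt ht
    have h2 := h hx0pa hpt
    rw [div_lt_iff₀ ht] at h2
    linarith
  obtain ⟨δ', hδ'mem, hsub⟩ := mem_nhdsGT_iff_exists_Ioo_subset.1 hev2
  have hδ' : (0:ℝ) < δ' := hδ'mem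
  set a := ⟪gradient φ x0, u⟫_ℝ with ha
  set F := fun t : ℝ => φ (x0 + t • u) - φ x0 - t * a - (1/2) * t^2 * (L + ε/2) with hF
  have hFd : ∀ t : ℝ, HasDerivAt F
      (⟪gradient φ (x0 + t • u), u⟫_ℝ - a - t * (L + ε/2)) t := by
    intro t
    have h1 := hasDerivAt_comp_line φ hdiff x0 u t
    have h2 : HasDerivAt (fun s : ℝ => s * a) a t := by
      simpa using (hasDerivAt_id t).mul_const a
    have h3 : HasDerivAt (fun s : ℝ => (1/2) * s^2 * (L + ε/2)) (t * (L + ε/2)) t := by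
      have h4 := ((hasDerivAt_pow 2 t).const_mul ((1:ℝ)/2)).mul_const (L + ε/2)
      refine h4.congr_deriv ?_
      push_cast
      ring
    exact ((h1.sub_const (φ x0)).sub h2).sub h3
  have hanti : AntitoneOn F (Icc 0 δ') := by
    apply antitoneOn_of_deriv_nonpos (convex_Icc 0 δ')
    · exact fun t _ => (hFd t).differentiableAt.continuousAt.continuousWithinAt
    · exact fun t _ => (hFd t).differentiableAt.differentiableWithinAt
    · intro t ht
      rw [interior_Icc] at ht
      rw [(hFd t).deriv]
      have h5 : ⟪gradient φ (x0 + t • u), u⟫_ℝ ≤ a + t * (L + ε/2) := hsub ht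
      linarith
  have hstep3 : ∀ t ∈ Ioo (0:ℝ) δ',
      φ (x0 + t • u) ≤ φ x0 + t * a + (1/2) * t^2 * (L + ε/2) := by
    intro t ht
    have h0 : F 0 = 0 := by simp [hF]
    have h6 := hanti (left_mem_Icc.2 hδ'.le) ⟨ht.1.le, ht.2.le⟩ ht.1.le
    rw [h0] at h6
    simp only [hF] at h6
    linarith
  -- second-order displacement via MVT
  have hgc : ContinuousAt (gradient φ) x0 := hlip.continuous.continuousAt
  set ε2 := ε / (2 * (‖w‖ + 1)) with hε2
  have hε2pos : 0 < ε2 := by positivity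
  obtain ⟨r2, hr2pos, hr2⟩ := Metric.continuousAt_iff.1 hgc ε2 hε2pos
  have hfds : ∀ z ∈ Metric.ball x0 r2,
      HasFDerivWithinAt φ (fderiv ℝ φ z) (Metric.ball x0 r2) z :=
    fun z _ => (hdiff z).hasFDerivAt.hasFDerivWithinAt
  have hbnd : ∀ z ∈ Metric.ball x0 r2, ‖fderiv ℝ φ z - fderiv ℝ φ x0‖ ≤ ε2 := by
    intro z hz
    rw [fderiv_norm_eq_grad]
    have := hr2 (Metric.mem_ball.1 hz)
    rw [dist_eq_norm] at this
    exact this.le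
  have hsmall : ∀ᶠ t in 𝓝[>] (0:ℝ), ‖t • u‖ + ‖((1/2) * t^2) • w‖ < r2 := by
    have hc : ContinuousAt (fun t : ℝ => ‖t • (u : EuclideanSpace ℝ (Fin n))‖
        + ‖((1/2) * t^2) • (w : EuclideanSpace ℝ (Fin n))‖) 0 := by fun_prop
    have hc0 : (fun t : ℝ => ‖t • (u : EuclideanSpace ℝ (Fin n))‖
        + ‖((1/2) * t^2) • (w : EuclideanSpace ℝ (Fin n))‖) 0 = 0 := by simp
    have h7 : Tendsto (fun t : ℝ => ‖t • u‖ + ‖((1/2) * t^2) • (w : EuclideanSpace ℝ (Fin n))‖) (𝓝 0) (𝓝 0) := by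
      simpa using hc.tendsto
    exact (h7.eventually (gt_mem_nhds hr2pos)).filter_mono nhdsWithin_le_nhds
  have hIoo : Ioo (0:ℝ) δ' ∈ 𝓝[>] (0:ℝ) :=
    Ioo_mem_nhdsGT_of_mem (by constructor <;> [rfl; exact hδ'])
  filter_upwards [hsmall, hIoo, self_mem_nhdsWithin] with t hts htI ht
  have hb1 : x0 + t • u ∈ Metric.ball x0 r2 := by
    rw [Metric.mem_ball, dist_eq_norm]
    have : x0 + t • u - x0 = t • u := by abel
    rw [this]
    have := norm_nonneg (((1/2) * t^2) • w)
    linarith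
  have hb2 : x0 + t • u + ((1/2) * t^2) • w ∈ Metric.ball x0 r2 := by
    rw [Metric.mem_ball, dist_eq_norm]
    have heq : x0 + t • u + ((1/2) * t^2) • w - x0 = t • u + ((1/2) * t^2) • w := by abel
    rw [heq]
    calc ‖t • u + ((1/2) * t^2) • w‖ ≤ ‖t • u‖ + ‖((1/2) * t^2) • w‖ := norm_add_le _ _
      _ < r2 := hts
  have hmvt := (convex_ball x0 r2).norm_image_sub_le_of_norm_hasFDerivWithin_le'
    hfds hbnd hb1 hb2
  have hd12 : x0 + t • u + ((1/2) * t^2) • w - (x0 + t • u) = ((1/2) * t^2) • w := by abel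
  rw [hd12] at hmvt
  have happ : (fderiv ℝ φ x0) (((1/2) * t^2) • w) = (1/2) * t^2 * ⟪gradient φ x0, w⟫_ℝ := by
    rw [map_smul, smul_eq_mul, inner_grad]
  have hnw : ‖((1/2) * t^2) • w‖ = (1/2) * t^2 * ‖w‖ := by
    rw [norm_smul, Real.norm_eq_abs, abs_of_nonneg (by positivity)]
  rw [happ, hnw, Real.norm_eq_abs] at hmvt
  have habs := abs_le.1 hmvt
  have h8 : φ (x0 + t • u + ((1/2) * t^2) • w)
      ≤ φ (x0 + t • u) + (1/2) * t^2 * ⟪gradient φ x0, w⟫_ℝ + ε2 * ((1/2) * t^2 * ‖w‖) := by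
    linarith [habs.2]
  have h9 := hstep3 t htI
  have h10 : ε2 * ‖w‖ ≤ ε/2 := by
    rw [hε2, div_mul_eq_mul_div, div_le_div_iff₀ (by positivity) (by norm_num)]
    nlinarith [norm_nonneg w]
  have h11 : ε2 * ((1/2) * t^2 * ‖w‖) ≤ (1/2) * t^2 * (ε/2) := by
    have ht2 : (0:ℝ) ≤ (1/2) * t^2 := by positivity
    calc ε2 * ((1/2) * t^2 * ‖w‖) = (1/2) * t^2 * (ε2 * ‖w‖) := by ring
      _ ≤ (1/2) * t^2 * (ε/2) := mul_le_mul_of_nonneg_left h10 ht2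
  calc φ (x0 + t • u + ((1/2) * t^2) • w)
      ≤ φ (x0 + t • u) + (1/2) * t^2 * ⟪gradient φ x0, w⟫_ℝ + ε2 * ((1/2) * t^2 * ‖w‖) := h8
    _ ≤ (φ x0 + t * a + (1/2) * t^2 * (L + ε/2)) + (1/2) * t^2 * ⟪gradient φ x0, w⟫_ℝ
        + (1/2) * t^2 * (ε/2) := by linarith
    _ = φ x0 + t * a + (1/2) * t^2 * (⟪gradient φ x0, w⟫_ℝ + L + ε) := by ring

lemma eventually_le_of (φ : EuclideanSpace ℝ (Fin n) → ℝ) (hφ : IsC11 φ)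
    (x0 u w : EuclideanSpace ℝ (Fin n))
    (ha : ⟪gradient φ x0, u⟫_ℝ ≤ 0)
    (h2 : ⟪gradient φ x0, u⟫_ℝ < 0 ∨ ⟪gradient φ x0, w⟫_ℝ + secondDD φ x0 u < 0) :
    ∀ᶠ t in 𝓝[>] (0:ℝ), φ (x0 + t • u + ((1/2) * t^2) • w) ≤ φ x0 := by
  set a := ⟪gradient φ x0, u⟫_ℝ with hadef
  set c := ⟪gradient φ x0, w⟫_ℝ + secondDD φ x0 u with hcdef
  rcases h2 with h2 | h2
  · have htay := taylor_upper φ hφ x0 u w (ε := 1) one_pos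
    have hsm : ∀ᶠ t in 𝓝[>] (0:ℝ), a + (1/2) * t * (c + 1) < 0 := by
      have hc : Tendsto (fun t : ℝ => a + (1/2) * t * (c + 1)) (𝓝 0) (𝓝 a) := by
        have : Continuous (fun t : ℝ => a + (1/2) * t * (c + 1)) := by continuity
        have h3 := this.tendsto 0
        simpa using h3
      exact (hc.eventually (gt_mem_nhds h2)).filter_mono nhdsWithin_le_nhds
    filter_upwards [htay, hsm, self_mem_nhdsWithin] with t h1 h2' ht
    have ht' : (0:ℝ) < t := ht
    have heq : t * a + (1/2) * t^2 * (c + 1) = t * (a + (1/2) * t * (c + 1)) := by ring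
    have h4 : t * (a + (1/2) * t * (c + 1)) ≤ 0 :=
      mul_nonpos_of_nonneg_of_nonpos ht'.le h2'.le
    have h5 : φ (x0 + t • u + ((1/2) * t^2) • w) ≤ φ x0 + t * a + (1/2) * t^2 * (c + 1) := by
      calc φ (x0 + t • u + ((1/2) * t^2) • w)
          ≤ φ x0 + t * a + (1/2) * t^2 * (⟪gradient φ x0, w⟫_ℝ + secondDD φ x0 u + 1) := h1
        _ = φ x0 + t * a + (1/2) * t^2 * (c + 1) := by rw [← hcdef]
    linarith [heq ▸ h4]
  · have htay := taylor_upper φ hφ x0 u w (ε := -c/2) (by linarith)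
    filter_upwards [htay, self_mem_nhdsWithin] with t h1 ht
    have ht' : (0:ℝ) < t := ht
    have h5 : φ (x0 + t • u + ((1/2) * t^2) • w) ≤ φ x0 + t * a + (1/2) * t^2 * (c/2) := by
      calc φ (x0 + t • u + ((1/2) * t^2) • w)
          ≤ φ x0 + t * a + (1/2) * t^2 * (⟪gradient φ x0, w⟫_ℝ + secondDD φ x0 u + -c/2) := h1
        _ = φ x0 + t * a + (1/2) * t^2 * (c/2) := by rw [← hcdef]; ring
    nlinarith [sq_nonneg t, mul_nonneg ht'.le ht'.le]

lemma eventually_le_inactive (φ : EuclideanSpace ℝ (Fin n) → ℝ) (hφ : Continuous φ)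
    (x0 u w : EuclideanSpace ℝ (Fin n)) (hneg : φ x0 < 0) :
    ∀ᶠ t in 𝓝[>] (0:ℝ), φ (x0 + t • u + ((1/2) * t^2) • w) ≤ 0 := by
  have hc : Tendsto (fun t : ℝ => φ (x0 + t • u + ((1/2) * t^2) • w)) (𝓝 0) (𝓝 (φ x0)) := by
    have hcc : Continuous (fun t : ℝ => φ (x0 + t • u + ((1/2) * t^2) • w)) := by fun_prop
    have h3 := hcc.tendsto 0
    simpa using h3
  have := hc.eventually (gt_mem_nhds hneg)
  exact (this.filter_mono nhdsWithin_le_nhds).mono fun t h => h.le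

/-- Proposition 3.1: a sufficient condition for the generalized Abadie second-order
regularity condition `(GASORC)`. -/
theorem stmt_0 {n l m : ℕ}
    (f : Fin l → EuclideanSpace ℝ (Fin n) → ℝ)
    (g : Fin m → EuclideanSpace ℝ (Fin n) → ℝ)
    (hf : ∀ i, IsC11 (f i)) (hg : ∀ j, IsC11 (g j))
    (Q0 : Set (EuclideanSpace ℝ (Fin n)))
    (hQ0 : Q0 = {x | ∀ j, g j x ≤ 0})
    (x0 u : EuclideanSpace ℝ (Fin n)) (hx0 : x0 ∈ Q0)
    (hsys : ∀ i : Fin l, ∃ v : EuclideanSpace ℝ (Fin n),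
      ⟪gradient (f i) x0, v⟫_ℝ + secondDD (f i) x0 u < 0 ∧
      ∀ j : Fin m, g j x0 = 0 → ⟪gradient (g j) x0, u⟫_ℝ = 0 →
        ⟪gradient (g j) x0, v⟫_ℝ + secondDD (g j) x0 u < 0) :
    L2lin f g x0 u ⊆ ⋂ i : Fin l, tcone2 (Q0 ∩ {x | f i x ≤ f i x0}) x0 u := by
  subst hQ0
  intro v hv
  obtain ⟨hvf, hvg⟩ := hv
  rw [mem_iInter]
  intro i
  obtain ⟨vi, hvi1, hvi2⟩ := hsys i
  have key : ∀ ε : ℝ, 0 < ε → ε ≤ 1 → ∀ᶠ t in 𝓝[>] (0:ℝ),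
      x0 + t • u + ((1/2) * t^2) • ((1 - ε) • v + ε • vi)
        ∈ {x | ∀ j, g j x ≤ 0} ∩ {x | f i x ≤ f i x0} := by
    intro ε hε hε1
    set w := (1 - ε) • v + ε • vi with hw
    have hinner : ∀ ψ : EuclideanSpace ℝ (Fin n) → ℝ,
        ⟪gradient ψ x0, w⟫_ℝ + secondDD ψ x0 u =
          (1 - ε) * (⟪gradient ψ x0, v⟫_ℝ + secondDD ψ x0 u)
          + ε * (⟪gradient ψ x0, vi⟫_ℝ + secondDD ψ x0 u) := by
      intro ψ
      rw [hw, inner_add_right, real_inner_smul_right, real_inner_smul_right]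
      ring
    have hfev : ∀ᶠ t in 𝓝[>] (0:ℝ),
        f i (x0 + t • u + ((1/2) * t^2) • w) ≤ f i x0 := by
      rcases hvf i with h | ⟨h, h2⟩
      · exact eventually_le_of (f i) (hf i) x0 u w h.le (Or.inl h)
      · apply eventually_le_of (f i) (hf i) x0 u w (le_of_eq h)
        right
        rw [hinner (f i)]
        have h2' : ⟪gradient (f i) x0, v⟫_ℝ + secondDD (f i) x0 u ≤ 0 := h2
        nlinarith [hvi1]
    have hgev : ∀ᶠ t in 𝓝[>] (0:ℝ),
        ∀ j, g j (x0 + t • u + ((1/2) * t^2) • w) ≤ 0 := by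
      rw [eventually_all]
      intro j
      by_cases hj : g j x0 = 0
      · have hconc : ∀ᶠ t in 𝓝[>] (0:ℝ),
            g j (x0 + t • u + ((1/2) * t^2) • w) ≤ g j x0 := by
          rcases hvg j hj with h | ⟨h, h2⟩
          · exact eventually_le_of (g j) (hg j) x0 u w h.le (Or.inl h)
          · apply eventually_le_of (g j) (hg j) x0 u w (le_of_eq h)
            right
            rw [hinner (g j)]
            have h2' : ⟪gradient (g j) x0, v⟫_ℝ + secondDD (g j) x0 u ≤ 0 := h2
            have h' : ⟪gradient (g j) x0, u⟫_ℝ = 0 := h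
            nlinarith [hvi2 j hj h']
        rw [hj] at hconc
        exact hconc
      · have hneg : g j x0 < 0 := lt_of_le_of_ne (hx0 j) hj
        exact eventually_le_inactive (g j) (hg j).1.continuous x0 u w hneg
    filter_upwards [hfev, hgev] with t h1 h2
    exact ⟨h2, h1⟩
  -- extract the sequences
  have exk : ∀ k : ℕ, ∃ t : ℝ, 0 < t ∧ t < 1/(k+1) ∧
      x0 + t • u + ((1/2) * t^2) • ((1 - (1/(k+1):ℝ)) • v + (1/(k+1):ℝ) • vi)
        ∈ {x | ∀ j, g j x ≤ 0} ∩ {x | f i x ≤ f i x0} := by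
    intro k
    have hk1 : (0:ℝ) < 1/(k+1) := by positivity
    have hk2 : (1/(k+1):ℝ) ≤ 1 := by
      rw [div_le_one (by positivity)]
      have : (0:ℝ) ≤ (k:ℝ) := Nat.cast_nonneg k
      linarith
    have h1 := key (1/(k+1)) hk1 hk2
    have h2 : ∀ᶠ t in 𝓝[>] (0:ℝ), t < 1/(k+1:ℝ) :=
      (gt_mem_nhds hk1).filter_mono nhdsWithin_le_nhds
    have h3 : ∀ᶠ t in 𝓝[>] (0:ℝ), 0 < t := self_mem_nhdsWithin
    obtain ⟨t, ht⟩ := (h3.and (h2.and h1)).exists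
    exact ⟨t, ht.1, ht.2.1, ht.2.2⟩
  choose tt htpos htlt hmem using exk
  refine ⟨tt, fun k => (1 - (1/(k+1):ℝ)) • v + (1/(k+1):ℝ) • vi, htpos, ?_, ?_, hmem⟩
  · exact squeeze_zero (fun k => (htpos k).le) (fun k => (htlt k).le)
      tendsto_one_div_add_atTop_nhds_zero_nat
  · have h0 : Tendsto (fun k : ℕ => 1/((k:ℝ)+1)) atTop (𝓝 0) := tendsto_one_div_add_atTop_nhds_zero_nat
    have h1 : Tendsto (fun k : ℕ => (1 - (1/(k+1):ℝ)) • v + (1/(k+1):ℝ) • vi) atTop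
        (𝓝 ((1 - (0:ℝ)) • v + (0:ℝ) • vi)) :=
      ((tendsto_const_nhds.sub h0).smul_const v).add (h0.smul_const vi)
    simpa using h1
end
end

section
/- Let Q0 := {x ∈ ℝⁿ : g_j(x) ≤ 0 for all j = 1,…,m}, let x⁰ ∈ Q0 and u ∈ ℝⁿ. Suppose that for each i ∈ {1,…,l} there exists wⁱ ∈ ℝⁿ such that ⟨∇f_k(x⁰), wⁱ⟩ + f_k°°(x⁰; u, u) < 0 for all k ∈ {1,…,l} \ {i} and ⟨∇g_j(x⁰), wⁱ⟩ + g_j°°(x⁰; u, u) < 0 for all j ∈ J(x⁰; u). Then the Abadie second-order regularity condition holds at x⁰ for the direction u, i.e. L²(Q; x⁰, u) ⊆ ∩_{i=1}^l T²(Qⁱ; x⁰, u), where Qⁱ := Q0 ∩ {x : f_k(x) ≤ f_k(x⁰) for all k ≠ i}. -/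
open Filter Topology Set
open scoped InnerProductSpace

noncomputable section

section Helpers
variable {n : ℕ}
local notation "E" => EuclideanSpace ℝ (Fin n)


lemma inner_grad_eq (φ : E → ℝ) (x y : E) :
    ⟪gradient φ x, y⟫_ℝ = fderiv ℝ φ x y := by
  rw [gradient, ← InnerProductSpace.toDual_apply_apply,
    (InnerProductSpace.toDual ℝ _).apply_symm_apply]

lemma hasDerivAt_line (φ : E → ℝ) (hφ : Differentiable ℝ φ) (y u : E) (s : ℝ) :
    HasDerivAt (fun s : ℝ => φ (y + s • u)) ⟪gradient φ (y + s • u), u⟫_ℝ s := by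
  have h1 : HasDerivAt (fun s : ℝ => y + s • u) u s := by
    simpa using ((hasDerivAt_id s).smul_const u).const_add y
  have h2 := ((hφ (y + s • u)).hasFDerivAt).comp_hasDerivAt s h1
  rw [inner_grad_eq]
  exact h2

lemma mono_aux {ψ h : ℝ → ℝ} {T : ℝ} (hT : 0 ≤ T)
    (hd : ∀ s, HasDerivAt ψ (h s) s) {c a : ℝ}
    (hb : ∀ s ∈ Ioo 0 T, h s ≤ a + c * s) :
    ψ T ≤ ψ 0 + a * T + c * T ^ 2 / 2 := by
  set F : ℝ → ℝ := fun s => a * s + c * s ^ 2 / 2 - ψ s with hF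
  have hdF : ∀ s, HasDerivAt F (a + c * s - h s) s := by
    intro s
    have h1 : HasDerivAt (fun s : ℝ => a * s + c * s ^ 2 / 2) (a + c * s) s := by
      have h2 := ((hasDerivAt_id s).const_mul a).add
        ((((hasDerivAt_id s).pow 2).const_mul c).div_const 2)
      convert h2 using 1
      · rfl
      · rfl
      · rfl
      simp [id]
      ring
    exact h1.sub (hd s)
  have hmono : MonotoneOn F (Icc 0 T) := by
    apply monotoneOn_of_deriv_nonneg (convex_Icc 0 T)
      (fun s _ => (hdF s).continuousAt.continuousWithinAt)
      (fun s hs => ((hdF s).differentiableAt).differentiableWithinAt)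
    intro s hs
    rw [interior_Icc] at hs
    rw [(hdF s).deriv]
    have := hb s hs
    linarith
  have := hmono ⟨le_refl 0, hT⟩ ⟨hT, le_refl T⟩ hT
  simp only [hF] at this
  nlinarith [this]

set_option maxHeartbeats 1000000 in
lemma keyA {φ : E → ℝ} (hφ : IsC11 φ) (x0 u v' : E) {c : ℝ}
    (hc : secondDD φ x0 u < c) :
    ∀ᶠ t in 𝓝[>] (0:ℝ), φ (x0 + t • u + ((1/2) * t^2) • v') ≤
      φ x0 + t * ⟪gradient φ x0, u⟫_ℝ + (1/2) * t^2 * (⟪gradient φ x0, v'⟫_ℝ + c) := by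
  obtain ⟨hφd, hφl⟩ := hφ
  obtain ⟨K, s, hs, hK⟩ := hφl x0
  obtain ⟨r, hr, hball⟩ := Metric.mem_nhds_iff.1 hs
  have hK' : LipschitzOnWith K (gradient φ) (Metric.ball x0 r) := hK.mono hball
  -- an elementary Lipschitz-type bound on inner products of gradient differences
  have hlip : ∀ x y : E, x ∈ Metric.ball x0 r → y ∈ Metric.ball x0 r → ∀ z : E,
      ⟪gradient φ x, z⟫_ℝ - ⟪gradient φ y, z⟫_ℝ ≤ (K : ℝ) * ‖x - y‖ * ‖z‖ := by
    intro x y hx hy z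
    have h1 : ⟪gradient φ x, z⟫_ℝ - ⟪gradient φ y, z⟫_ℝ
        = ⟪gradient φ x - gradient φ y, z⟫_ℝ := by rw [inner_sub_left]
    have h2 := real_inner_le_norm (gradient φ x - gradient φ y) z
    have h3 := hK'.dist_le_mul x hx y hy
    rw [dist_eq_norm] at h3
    rw [h1]
    calc ⟪gradient φ x - gradient φ y, z⟫_ℝ ≤ ‖gradient φ x - gradient φ y‖ * ‖z‖ := h2
      _ ≤ (K : ℝ) * ‖x - y‖ * ‖z‖ := by
          rw [← dist_eq_norm]
          exact mul_le_mul_of_nonneg_right h3 (norm_nonneg z)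
  have hbdd : IsBoundedUnder (· ≤ ·) ((𝓝 x0) ×ˢ (𝓝[>] (0:ℝ)))
      (fun p : E × ℝ =>
        (⟪gradient φ (p.1 + p.2 • u), u⟫_ℝ - ⟪gradient φ p.1, u⟫_ℝ) / p.2) := by
    refine isBoundedUnder_of_eventually_le (a := (K : ℝ) * ‖u‖ * ‖u‖) ?_
    filter_upwards [prod_mem_prod (Metric.ball_mem_nhds x0 (by positivity : (0:ℝ) < r/2))
      (Ioo_mem_nhdsGT (by positivity : (0:ℝ) < r / (2 * (‖u‖ + 1))))] with p hp
    obtain ⟨hp1, hp2⟩ := hp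
    have ht : 0 < p.2 := hp2.1
    have hx1 : p.1 ∈ Metric.ball x0 r := by
      have := hp1
      simp only [Metric.mem_ball] at this ⊢
      linarith
    have hx2 : p.1 + p.2 • u ∈ Metric.ball x0 r := by
      simp only [Metric.mem_ball] at hp1 ⊢
      have h4 : dist (p.1 + p.2 • u) x0 ≤ dist p.1 x0 + ‖p.2 • u‖ := by
        rw [dist_eq_norm, dist_eq_norm]
        calc ‖p.1 + p.2 • u - x0‖ = ‖(p.1 - x0) + p.2 • u‖ := by congr 1; abel
          _ ≤ ‖p.1 - x0‖ + ‖p.2 • u‖ := norm_add_le _ _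
      have h5 : ‖p.2 • u‖ = p.2 * ‖u‖ := by
        rw [norm_smul, Real.norm_eq_abs, abs_of_pos ht]
      have h6 : p.2 * ‖u‖ < r / 2 := by
        have h7 : p.2 * (‖u‖ + 1) < r / (2 * (‖u‖ + 1)) * (‖u‖ + 1) := by
          apply mul_lt_mul_of_pos_right hp2.2 (by positivity)
        have h8 : r / (2 * (‖u‖ + 1)) * (‖u‖ + 1) = r / 2 := by
          field_simp
        nlinarith [norm_nonneg u, ht]
      linarith
    have h9 := hlip _ _ hx2 hx1 u
    have h10 : ‖p.1 + p.2 • u - p.1‖ = p.2 * ‖u‖ := by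
      simp [norm_smul, Real.norm_eq_abs, abs_of_pos ht]
    rw [h10] at h9
    rw [div_le_iff₀ ht]
    calc ⟪gradient φ (p.1 + p.2 • u), u⟫_ℝ - ⟪gradient φ p.1, u⟫_ℝ
        ≤ (K:ℝ) * (p.2 * ‖u‖) * ‖u‖ := h9
      _ = (K:ℝ) * ‖u‖ * ‖u‖ * p.2 := by ring
  set D := secondDD φ x0 u with hD
  set c' := (D + c) / 2 with hc'def
  have hc'1 : D < c' := by simp only [hc'def]; linarith
  have hc'2 : c' < c := by simp only [hc'def]; linarith
  have hev : ∀ᶠ p in (𝓝 x0) ×ˢ (𝓝[>] (0:ℝ)),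
      (⟪gradient φ (p.1 + p.2 • u), u⟫_ℝ - ⟪gradient φ p.1, u⟫_ℝ) / p.2 < c' :=
    eventually_lt_of_limsup_lt hc'1 hbdd
  rw [eventually_prod_iff] at hev
  obtain ⟨pa, hpa, pb, hpb, hab⟩ := hev
  obtain ⟨r₁, hr₁, hpa'⟩ := Metric.eventually_nhds_iff.1 hpa
  obtain ⟨δ, hδ, hsub⟩ := mem_nhdsGT_iff_exists_Ioo_subset.1 hpb
  have hδ0 : (0:ℝ) < δ := hδ
  -- property P
  have P : ∀ x : E, dist x x0 < r₁ → ∀ τ : ℝ, 0 < τ → τ < δ →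
      ⟪gradient φ (x + τ • u), u⟫_ℝ ≤ ⟪gradient φ x, u⟫_ℝ + c' * τ := by
    intro x hx τ hτ1 hτ2
    have := hab (hpa' hx) (hsub ⟨hτ1, hτ2⟩)
    rw [div_lt_iff₀ hτ1] at this
    linarith
  have hmin : (0:ℝ) < min r₁ r := lt_min hr₁ hr
  have ev3 : ∀ᶠ t in 𝓝[>] (0:ℝ), t * ‖u‖ + (1/2) * t^2 * ‖v'‖ < min r₁ r := by
    have hcont : Tendsto (fun t : ℝ => t * ‖u‖ + (1/2) * t^2 * ‖v'‖) (𝓝 0) (𝓝 0) := by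
      have : Continuous (fun t : ℝ => t * ‖u‖ + (1/2) * t^2 * ‖v'‖) := by fun_prop
      have h := this.tendsto 0
      simpa using h
    exact (hcont.mono_left nhdsWithin_le_nhds).eventually_lt_const hmin
  have ev4 : ∀ᶠ t in 𝓝[>] (0:ℝ),
      (K:ℝ) * t^2 * ‖v'‖^2 / 4 + (K:ℝ) * t * ‖v'‖ * ‖u‖ < c - c' := by
    have hcont : Tendsto (fun t : ℝ => (K:ℝ) * t^2 * ‖v'‖^2 / 4 + (K:ℝ) * t * ‖v'‖ * ‖u‖)
        (𝓝 0) (𝓝 0) := by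
      have : Continuous (fun t : ℝ => (K:ℝ) * t^2 * ‖v'‖^2 / 4 + (K:ℝ) * t * ‖v'‖ * ‖u‖) := by
        fun_prop
      have h := this.tendsto 0
      simpa using h
    exact (hcont.mono_left nhdsWithin_le_nhds).eventually_lt_const (by linarith)
  filter_upwards [self_mem_nhdsWithin, Ioo_mem_nhdsGT hδ0, ev3, ev4]
    with t ht htδ ht3 ht4
  have ht0 : 0 < t := ht
  set w₀ : E := ((1/2) * t^2) • v' with hw₀
  have hw₀norm : ‖w₀‖ = (1/2) * t^2 * ‖v'‖ := by
    rw [hw₀, norm_smul, Real.norm_eq_abs, abs_of_pos (by positivity)]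
  have hw₀r : ‖w₀‖ < min r₁ r := by
    rw [hw₀norm]
    nlinarith [norm_nonneg u, ht0]
  -- step 2 : φ (x0 + w₀) bound
  have step2 : φ (x0 + w₀) ≤ φ x0 + ⟪gradient φ x0, w₀⟫_ℝ + (K:ℝ) * ‖w₀‖^2 / 2 := by
    have hm := mono_aux (ψ := fun s : ℝ => φ (x0 + s • w₀))
      (h := fun s : ℝ => ⟪gradient φ (x0 + s • w₀), w₀⟫_ℝ) (T := 1) zero_le_one
      (fun s => hasDerivAt_line φ hφd x0 w₀ s)
      (c := (K:ℝ) * ‖w₀‖^2) (a := ⟪gradient φ x0, w₀⟫_ℝ) ?_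
    · have e1 : x0 + (1:ℝ) • w₀ = x0 + w₀ := by rw [one_smul]
      have e0 : x0 + (0:ℝ) • w₀ = x0 := by rw [zero_smul, add_zero]
      simp only [e1, e0] at hm
      calc φ (x0 + w₀) ≤ φ x0 + ⟪gradient φ x0, w₀⟫_ℝ * 1 + (K:ℝ) * ‖w₀‖^2 * 1^2/2 := hm
        _ = φ x0 + ⟪gradient φ x0, w₀⟫_ℝ + (K:ℝ) * ‖w₀‖^2 / 2 := by ring
    · intro s hs
      have hmem1 : x0 + s • w₀ ∈ Metric.ball x0 r := by
        simp only [Metric.mem_ball, dist_eq_norm, add_sub_cancel_left]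
        rw [norm_smul, Real.norm_eq_abs, abs_of_pos hs.1]
        nlinarith [hw₀r.trans_le (min_le_right r₁ r), norm_nonneg w₀, hs.2]
      have hmem0 : x0 ∈ Metric.ball x0 r := Metric.mem_ball_self hr
      have := hlip _ _ hmem1 hmem0 w₀
      have hn : ‖x0 + s • w₀ - x0‖ = s * ‖w₀‖ := by
        simp [norm_smul, Real.norm_eq_abs, abs_of_pos hs.1]
      rw [hn] at this
      nlinarith [this]
  -- step 1 : move along u
  have hyb : dist (x0 + w₀) x0 < r₁ := by
    rw [dist_eq_norm, add_sub_cancel_left]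
    exact hw₀r.trans_le (min_le_left r₁ r)
  have step1 : φ (x0 + w₀ + t • u) ≤ φ (x0 + w₀)
      + ⟪gradient φ (x0 + w₀), u⟫_ℝ * t + c' * t^2 / 2 := by
    have hm := mono_aux (ψ := fun s : ℝ => φ (x0 + w₀ + s • u))
      (h := fun s : ℝ => ⟪gradient φ (x0 + w₀ + s • u), u⟫_ℝ) (T := t) (le_of_lt ht0)
      (fun s => hasDerivAt_line φ hφd (x0 + w₀) u s)
      (a := ⟪gradient φ (x0 + w₀ + (0:ℝ) • u), u⟫_ℝ) (c := c')
      (fun s hs => by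
        have hP := P (x0 + w₀) hyb s hs.1 (hs.2.trans htδ.2)
        have e0 : x0 + w₀ + (0:ℝ) • u = x0 + w₀ := by rw [zero_smul, add_zero]
        rw [e0]
        exact hP)
    have e0 : x0 + w₀ + (0:ℝ) • u = x0 + w₀ := by rw [zero_smul, add_zero]
    simp only [e0] at hm
    exact hm
  -- gradient at x0 + w₀ close to gradient at x0
  have hgb : ⟪gradient φ (x0 + w₀), u⟫_ℝ ≤ ⟪gradient φ x0, u⟫_ℝ + (K:ℝ) * ‖w₀‖ * ‖u‖ := by
    have hmem1 : x0 + w₀ ∈ Metric.ball x0 r := by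
      simp only [Metric.mem_ball, dist_eq_norm, add_sub_cancel_left]
      exact hw₀r.trans_le (min_le_right r₁ r)
    have := hlip _ _ hmem1 (Metric.mem_ball_self hr) u
    rw [add_sub_cancel_left] at this
    linarith
  have hpt : x0 + t • u + ((1/2) * t^2) • v' = x0 + w₀ + t • u := by
    rw [hw₀]; abel
  rw [hpt]
  have hinner : ⟪gradient φ x0, w₀⟫_ℝ = (1/2) * t^2 * ⟪gradient φ x0, v'⟫_ℝ := by
    rw [hw₀, real_inner_smul_right]
  have hKnn : (0:ℝ) ≤ (K:ℝ) := K.coe_nonneg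
  rw [hinner, hw₀norm] at step2
  rw [hw₀norm] at hgb
  have hgbt := mul_le_mul_of_nonneg_right hgb (le_of_lt ht0)
  have ht4mul := mul_le_mul_of_nonneg_left ht4.le (by positivity : (0:ℝ) ≤ t^2/2)
  nlinarith [step1, step2, hgbt, ht4mul]

lemma caseLemma {φ : E → ℝ} (hφ : IsC11 φ) (x0 u v' : E)
    (h : ⟪gradient φ x0, u⟫_ℝ < 0 ∨
      (⟪gradient φ x0, u⟫_ℝ = 0 ∧ ⟪gradient φ x0, v'⟫_ℝ + secondDD φ x0 u < 0)) :
    ∀ᶠ t in 𝓝[>] (0:ℝ), φ (x0 + t • u + ((1/2) * t^2) • v') ≤ φ x0 := by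
  rcases h with h | ⟨h1, h2⟩
  · have hA := keyA hφ x0 u v' (c := secondDD φ x0 u + 1) (by linarith)
    set A := ⟪gradient φ x0, u⟫_ℝ with hAdef
    set B := ⟪gradient φ x0, v'⟫_ℝ + (secondDD φ x0 u + 1) with hBdef
    have ev : ∀ᶠ t in 𝓝[>] (0:ℝ), A + (1/2) * t * B < 0 := by
      have hco : Continuous fun t : ℝ => A + (1/2) * t * B := by fun_prop
      have hT : Tendsto (fun t : ℝ => A + (1/2) * t * B) (𝓝 0) (𝓝 A) :=
        hco.tendsto' 0 A (by norm_num)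
      exact ((hT.mono_left nhdsWithin_le_nhds).eventually_lt_const h)
    filter_upwards [hA, ev, self_mem_nhdsWithin] with t hA' hev' ht
    have ht0 : (0:ℝ) < t := ht
    nlinarith [hA', hev', ht0]
  · have hc : secondDD φ x0 u < -⟪gradient φ x0, v'⟫_ℝ := by linarith
    have hA := keyA hφ x0 u v' hc
    filter_upwards [hA] with t hA'
    rw [h1] at hA'
    linarith

lemma lex_combine {a bv bw D lam : ℝ}
    (h : lexLE (a, bv + D)) (hw : bw + D < 0) (hl0 : 0 < lam) (hl1 : lam ≤ 1) :
    a < 0 ∨ (a = 0 ∧ ((1 - lam) * bv + lam * bw) + D < 0) := by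
  rcases h with h | ⟨h1, h2⟩
  · exact Or.inl h
  · simp only at h1 h2
    refine Or.inr ⟨h1, ?_⟩
    nlinarith [mul_le_mul_of_nonneg_left h2 (by linarith : (0:ℝ) ≤ 1 - lam),
      mul_lt_mul_of_pos_left hw hl0]

theorem stmt_1' {l m : ℕ}
    (f : Fin l → E → ℝ) (g : Fin m → E → ℝ)
    (hf : ∀ i, IsC11 (f i)) (hg : ∀ j, IsC11 (g j))
    (Q0 : Set E) (hQ0 : Q0 = {x | ∀ j, g j x ≤ 0})
    (x0 u : E) (hx0 : x0 ∈ Q0)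
    (hsys : ∀ i : Fin l, ∃ w : E,
      (∀ k : Fin l, k ≠ i →
        ⟪gradient (f k) x0, w⟫_ℝ + secondDD (f k) x0 u < 0) ∧
      ∀ j : Fin m, g j x0 = 0 → ⟪gradient (g j) x0, u⟫_ℝ = 0 →
        ⟪gradient (g j) x0, w⟫_ℝ + secondDD (g j) x0 u < 0) :
    L2lin f g x0 u ⊆
      ⋂ i : Fin l, tcone2 (Q0 ∩ {x | ∀ k : Fin l, k ≠ i → f k x ≤ f k x0}) x0 u := by
  intro v hv
  rw [mem_iInter]
  intro i
  obtain ⟨hv1, hv2⟩ := hv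
  obtain ⟨w, hwf, hwg⟩ := hsys i
  have claim : ∀ lam : ℝ, 0 < lam → lam ≤ 1 →
      ∀ᶠ t in 𝓝[>] (0:ℝ), x0 + t • u + ((1/2) * t^2) • (v + lam • (w - v)) ∈
        Q0 ∩ {x | ∀ k : Fin l, k ≠ i → f k x ≤ f k x0} := by
    intro lam hl0 hl1
    set v' : E := v + lam • (w - v) with hv'def
    have hinner : ∀ q : E, ⟪q, v'⟫_ℝ = (1 - lam) * ⟪q, v⟫_ℝ + lam * ⟪q, w⟫_ℝ := by
      intro q
      rw [hv'def, inner_add_right, real_inner_smul_right, inner_sub_right]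
      ring
    have hF : ∀ k : Fin l, ∀ᶠ t in 𝓝[>] (0:ℝ),
        k ≠ i → f k (x0 + t • u + ((1/2) * t^2) • v') ≤ f k x0 := by
      intro k
      by_cases hk : k = i
      · exact Eventually.of_forall fun t hne => absurd hk hne
      · refine (caseLemma (hf k) x0 u v' ?_).mono fun t h _ => h
        have hcomb := lex_combine (hv1 k) (hwf k hk) hl0 hl1
        rcases hcomb with h | ⟨h1, h2⟩
        · exact Or.inl h
        · exact Or.inr ⟨h1, by rw [hinner]; exact h2⟩
    have hG : ∀ j : Fin m, ∀ᶠ t in 𝓝[>] (0:ℝ),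
        g j (x0 + t • u + ((1/2) * t^2) • v') ≤ 0 := by
      intro j
      have hj0 : g j x0 ≤ 0 := by rw [hQ0] at hx0; exact hx0 j
      rcases lt_or_eq_of_le hj0 with hlt | heq0
      · have hc1 : Continuous fun t : ℝ => x0 + t • u + ((1/2) * t^2) • v' := by fun_prop
        have hT : Tendsto (fun t : ℝ => g j (x0 + t • u + ((1/2) * t^2) • v'))
            (𝓝 0) (𝓝 (g j x0)) :=
          ((hg j).1.continuous.comp hc1).tendsto' 0 (g j x0) (by norm_num)
        exact ((hT.mono_left nhdsWithin_le_nhds).eventually_lt_const hlt).mono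
          fun t ht => ht.le
      · have heq0' : g j x0 = 0 := heq0
        have hlex := hv2 j heq0'
        refine (caseLemma (hg j) x0 u v' ?_).mono fun t h => heq0' ▸ h
        rcases hlex with h | ⟨h1, h2⟩
        · exact Or.inl h
        · simp only at h1 h2
          have hww := hwg j heq0' h1
          have hcomb := lex_combine (Or.inr ⟨h1, h2⟩ :
            lexLE (⟪gradient (g j) x0, u⟫_ℝ, ⟪gradient (g j) x0, v⟫_ℝ + secondDD (g j) x0 u))
            hww hl0 hl1
          rcases hcomb with h | ⟨ha, hb⟩
          · exact Or.inl h
          · exact Or.inr ⟨ha, by rw [hinner]; exact hb⟩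
    have hallF := (eventually_all (ι := Fin l)).2 hF
    have hallG := (eventually_all (ι := Fin m)).2 hG
    filter_upwards [hallF, hallG] with t h1 h2
    exact ⟨by rw [hQ0]; exact h2, h1⟩
  have hδ : ∀ k : ℕ, ∃ δ : ℝ, 0 < δ ∧ ∀ t ∈ Ioo (0:ℝ) δ,
      x0 + t • u + ((1/2) * t^2) • (v + (1/((k:ℝ)+1)) • (w - v)) ∈
        Q0 ∩ {x | ∀ k : Fin l, k ≠ i → f k x ≤ f k x0} := by
    intro k
    have hcl := claim (1/((k:ℝ)+1)) (by positivity)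
      (by rw [div_le_one (by positivity)]; linarith [show (0:ℝ) ≤ (k:ℝ) from Nat.cast_nonneg k])
    obtain ⟨δ, hδm, hsub⟩ := mem_nhdsGT_iff_exists_Ioo_subset.1 hcl
    exact ⟨δ, hδm, fun t ht => hsub ht⟩
  choose δ hδpos hδmem using hδ
  refine ⟨fun k => min (δ k / 2) (1/((k:ℝ)+1)),
    fun k => v + (1/((k:ℝ)+1)) • (w - v), fun k => lt_min (half_pos (hδpos _)) (by positivity),
    ?_, ?_, ?_⟩
  · apply squeeze_zero (fun k => (lt_min (half_pos (hδpos _)) (by positivity)).le)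
      (fun k => min_le_right _ _) tendsto_one_div_add_atTop_nhds_zero_nat
  · have h0 : Tendsto (fun k : ℕ => (1/((k:ℝ)+1))) atTop (𝓝 0) :=
      tendsto_one_div_add_atTop_nhds_zero_nat
    have := (h0.smul_const (w - v)).const_add v
    simpa using this
  · intro k
    have hmem := hδmem k (min (δ k / 2) (1/((k:ℝ)+1)))
      ⟨lt_min (half_pos (hδpos _)) (by positivity),
        lt_of_le_of_lt (min_le_left _ _) (half_lt_self (hδpos k))⟩
    exact hmem

end Helpers

/-- Proposition 3.2: a sufficient condition for the Abadie second-order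
regularity condition `(ASORC)`. -/
theorem stmt_1 {n l m : ℕ}
    (f : Fin l → EuclideanSpace ℝ (Fin n) → ℝ)
    (g : Fin m → EuclideanSpace ℝ (Fin n) → ℝ)
    (hf : ∀ i, IsC11 (f i)) (hg : ∀ j, IsC11 (g j))
    (Q0 : Set (EuclideanSpace ℝ (Fin n)))
    (hQ0 : Q0 = {x | ∀ j, g j x ≤ 0})
    (x0 u : EuclideanSpace ℝ (Fin n)) (hx0 : x0 ∈ Q0)
    (hsys : ∀ i : Fin l, ∃ w : EuclideanSpace ℝ (Fin n),
      (∀ k : Fin l, k ≠ i →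
        ⟪gradient (f k) x0, w⟫_ℝ + secondDD (f k) x0 u < 0) ∧
      ∀ j : Fin m, g j x0 = 0 → ⟪gradient (g j) x0, u⟫_ℝ = 0 →
        ⟪gradient (g j) x0, w⟫_ℝ + secondDD (g j) x0 u < 0) :
    L2lin f g x0 u ⊆
      ⋂ i : Fin l, tcone2 (Q0 ∩ {x | ∀ k : Fin l, k ≠ i → f k x ≤ f k x0}) x0 u :=
  stmt_1' f g hf hg Q0 hQ0 x0 u hx0 hsys
end
end

section
/- Let Q0 := {x ∈ ℝⁿ : g_j(x) ≤ 0 for all j = 1,…,m} and x⁰ ∈ Q0. If x⁰ is a Geoffrion properly efficient solution of the problem of minimizing f = (f₁,…,f_l) over Q0, and the generalized Abadie first-order regularity condition L(Q; x⁰) ⊆ ∩_{i=1}^l T(Mⁱ; x⁰) holds at x⁰, then there is no u ∈ ℝⁿ satisfying: ⟨∇f_i(x⁰), u⟩ ≤ 0 for all i = 1,…,l, ⟨∇f_i(x⁰), u⟩ < 0 for at least one i, and ⟨∇g_j(x⁰), u⟩ ≤ 0 for all j ∈ J(x⁰). -/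
open Filter Topology Set
open scoped InnerProductSpace

noncomputable section

/-- The (first-order) tangent cone `T(C; x⁰)`. -/
def tcone {n : ℕ} (C : Set (EuclideanSpace ℝ (Fin n)))
    (x0 : EuclideanSpace ℝ (Fin n)) : Set (EuclideanSpace ℝ (Fin n)) :=
  {d | ∃ t : ℕ → ℝ, ∃ dk : ℕ → EuclideanSpace ℝ (Fin n),
    (∀ k, 0 < t k) ∧ Tendsto t atTop (𝓝 0) ∧ Tendsto dk atTop (𝓝 d) ∧
    ∀ k, x0 + t k • dk k ∈ C}

/-- `x0` is a Geoffrion properly efficient solution of the problem of minimizing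
the family `f` over `Q0`. -/
def Geoffrion {n l : ℕ} (Q0 : Set (EuclideanSpace ℝ (Fin n)))
    (f : Fin l → EuclideanSpace ℝ (Fin n) → ℝ)
    (x0 : EuclideanSpace ℝ (Fin n)) : Prop :=
  x0 ∈ Q0 ∧
  (¬ ∃ x ∈ Q0, (∀ i, f i x ≤ f i x0) ∧ ∃ k, f k x < f k x0) ∧
  ∃ M > (0 : ℝ), ∀ i, ∀ x ∈ Q0, f i x < f i x0 →
    ∃ j, f j x0 < f j x ∧ (f i x0 - f i x) / (f j x - f j x0) ≤ M

open Asymptotics in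

lemma diffquot_tendsto {n : ℕ} {φ : EuclideanSpace ℝ (Fin n) → ℝ}
    (hφ : Differentiable ℝ φ) (x0 u : EuclideanSpace ℝ (Fin n))
    {t : ℕ → ℝ} {d : ℕ → EuclideanSpace ℝ (Fin n)}
    (ht : ∀ k, 0 < t k) (ht0 : Tendsto t atTop (𝓝 0))
    (hd : Tendsto d atTop (𝓝 u)) :
    Tendsto (fun k => (φ (x0 + t k • d k) - φ x0) / t k) atTop
      (𝓝 ⟪gradient φ x0, u⟫_ℝ) := by
  have hgr := (hφ x0).hasGradientAt
  have hfd := hgr.hasFDerivAt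
  set L := InnerProductSpace.toDual ℝ _ (gradient φ x0) with hL
  have hLapp : ∀ v, L v = ⟪gradient φ x0, v⟫_ℝ := fun v => rfl
  have hh : Tendsto (fun k => t k • d k) atTop (𝓝 0) := by
    have := ht0.smul hd; simpa using this
  have hcomp : (fun k => φ (x0 + t k • d k) - φ x0 - L (t k • d k)) =o[atTop]
      (fun k => t k • d k) := by
    have h2 : Tendsto (fun k => x0 + t k • d k) atTop (𝓝 x0) := by
      have : Tendsto (fun k => x0 + t k • d k) atTop (𝓝 (x0 + 0)) :=
        tendsto_const_nhds.add hh
      simpa using this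
    have := hfd.isLittleO.comp_tendsto h2
    simp only [Function.comp_def, add_sub_cancel_left] at this
    exact this
  have hbigO : (fun k => t k • d k : ℕ → EuclideanSpace ℝ (Fin n)) =O[atTop]
      (fun k => t k) := by
    rw [isBigO_iff]
    refine ⟨‖u‖ + 1, ?_⟩
    have : ∀ᶠ k in atTop, ‖d k‖ < ‖u‖ + 1 :=
      (hd.norm.eventually_lt_const (by linarith [norm_nonneg u]))
    filter_upwards [this] with k hk
    rw [norm_smul]
    have : ‖t k‖ * ‖d k‖ ≤ ‖t k‖ * (‖u‖ + 1) := by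
      apply mul_le_mul_of_nonneg_left hk.le (norm_nonneg _)
    calc ‖t k‖ * ‖d k‖ ≤ ‖t k‖ * (‖u‖ + 1) := this
      _ = (‖u‖ + 1) * ‖t k‖ := by ring
  have hlo := hcomp.trans_isBigO hbigO
  have h0 : Tendsto (fun k => (φ (x0 + t k • d k) - φ x0 - L (t k • d k)) / t k)
      atTop (𝓝 0) := hlo.tendsto_div_nhds_zero
  have hLd : Tendsto (fun k => L (d k)) atTop (𝓝 (L u)) :=
    (L.continuous.tendsto u).comp hd
  have heq : ∀ k, (φ (x0 + t k • d k) - φ x0) / t k =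
      (φ (x0 + t k • d k) - φ x0 - L (t k • d k)) / t k + L (d k) := by
    intro k
    have htk := (ht k).ne'
    rw [map_smul]
    field_simp
    ring
  have := h0.add hLd
  simp only [zero_add] at this
  rw [show (⟪gradient φ x0, u⟫_ℝ) = L u from rfl]
  exact Tendsto.congr (fun k => (heq k).symm) this


/-- Theorem 4.1: first-order necessary optimality condition under the generalized
Abadie first-order regularity condition `(GAFORC)`. -/
theorem stmt_2 {n l m : ℕ}
    (f : Fin l → EuclideanSpace ℝ (Fin n) → ℝ)
    (g : Fin m → EuclideanSpace ℝ (Fin n) → ℝ)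
    (hf : ∀ i, IsC11 (f i)) (hg : ∀ j, IsC11 (g j))
    (Q0 : Set (EuclideanSpace ℝ (Fin n)))
    (hQ0 : Q0 = {x | ∀ j, g j x ≤ 0})
    (x0 : EuclideanSpace ℝ (Fin n))
    (hgeof : Geoffrion Q0 f x0)
    (hreg : {u : EuclideanSpace ℝ (Fin n) |
        (∀ i, ⟪gradient (f i) x0, u⟫_ℝ ≤ 0) ∧
        (∀ j, g j x0 = 0 → ⟪gradient (g j) x0, u⟫_ℝ ≤ 0)} ⊆
      ⋂ i : Fin l, tcone (Q0 ∩ {x | f i x ≤ f i x0}) x0) :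
    ¬ ∃ u : EuclideanSpace ℝ (Fin n),
      (∀ i, ⟪gradient (f i) x0, u⟫_ℝ ≤ 0) ∧
      (∃ i, ⟪gradient (f i) x0, u⟫_ℝ < 0) ∧
      (∀ j, g j x0 = 0 → ⟪gradient (g j) x0, u⟫_ℝ ≤ 0) := by
  rintro ⟨u, hfu, ⟨i0, hi0⟩, hgu⟩
  obtain ⟨hx0Q, heff, M, hM, hgeo⟩ := hgeof
  have hu : u ∈ ⋂ i, tcone (Q0 ∩ {x | f i x ≤ f i x0}) x0 := hreg ⟨hfu, hgu⟩
  obtain ⟨t, d, ht, ht0, hd, hmem⟩ := Set.mem_iInter.mp hu i0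
  set a := ⟪gradient (f i0) x0, u⟫_ℝ with ha
  set xk : ℕ → EuclideanSpace ℝ (Fin n) := fun k => x0 + t k • d k with hxk
  have hr : ∀ i, Tendsto (fun k => (f i (xk k) - f i x0) / t k) atTop
      (𝓝 ⟪gradient (f i) x0, u⟫_ℝ) :=
    fun i => diffquot_tendsto (hf i).1 x0 u ht ht0 hd
  have hev : ∀ᶠ k in atTop, (f i0 (xk k) - f i0 x0) / t k < a / 2 :=
    (hr i0).eventually_lt_const (by linarith)
  have hlt : ∀ᶠ k in atTop, f i0 (xk k) < f i0 x0 := by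
    filter_upwards [hev] with k hk
    have h1 := (div_lt_iff₀ (ht k)).mp hk
    nlinarith [ht k]
  have hevP : ∀ᶠ k in atTop, ∃ j, -((f i0 (xk k) - f i0 x0) / t k) ≤
      M * ((f j (xk k) - f j x0) / t k) := by
    filter_upwards [hlt] with k hk
    obtain ⟨j, hj1, hj2⟩ := hgeo i0 (xk k) (hmem k).1 hk
    refine ⟨j, ?_⟩
    have hB : 0 < f j (xk k) - f j x0 := by linarith
    have h1 : f i0 x0 - f i0 (xk k) ≤ M * (f j (xk k) - f j x0) :=
      (div_le_iff₀ hB).mp hj2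
    rw [← neg_div, ← mul_div_assoc]
    exact (div_le_div_iff_of_pos_right (ht k)).mpr (by linarith)
  have hfreq : ∃ j, ∃ᶠ k in atTop, -((f i0 (xk k) - f i0 x0) / t k) ≤
      M * ((f j (xk k) - f j x0) / t k) := by
    by_contra hcon
    push_neg at hcon
    have hall : ∀ᶠ k in atTop, ∀ j, ¬ (-((f i0 (xk k) - f i0 x0) / t k) ≤
        M * ((f j (xk k) - f j x0) / t k)) := by
      rw [eventually_all]
      intro j
      exact (not_frequently.mp (by simpa using hcon j))
    obtain ⟨k, ⟨j, hj⟩, hk2⟩ := (hevP.and hall).exists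
    exact hk2 j hj
  obtain ⟨j, hfq⟩ := hfreq
  have hE1 : ∀ᶠ k in atTop, -(a / 2) < -((f i0 (xk k) - f i0 x0) / t k) :=
    ((hr i0).neg).eventually_const_lt (by linarith)
  have hE2 : ∀ᶠ k in atTop, M * ((f j (xk k) - f j x0) / t k) < -(a / 2) := by
    have hc : M * ⟪gradient (f j) x0, u⟫_ℝ < -(a / 2) := by
      nlinarith [hfu j]
    exact ((hr j).const_mul M).eventually_lt_const hc
  obtain ⟨k, hk1, hk2, hk3⟩ := (hfq.and_eventually (hE1.and hE2)).exists
  linarith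
end
end

section
/- Let Q0 := {x ∈ ℝⁿ : g_j(x) ≤ 0 for all j = 1,…,m} and let x⁰ ∈ Q0 be a Geoffrion properly efficient solution of the problem of minimizing f = (f₁,…,f_l) over Q0. Suppose that for every critical direction u at x⁰ the generalized Abadie second-order regularity condition L²(Q; x⁰, u) ⊆ ∩_{i=1}^l T²(Mⁱ; x⁰, u) holds. Then there is no pair (u, v) ∈ ℝⁿ × ℝⁿ satisfying: (⟨∇f_i(x⁰), u⟩, ⟨∇f_i(x⁰), v⟩ + f_i°°(x⁰; u, u)) ≦_lex (0,0) for all i = 1,…,l, with (⟨∇f_i(x⁰), u⟩, ⟨∇f_i(x⁰), v⟩ + f_i°°(x⁰; u, u)) <_lex (0,0) for at least one i, and (⟨∇g_j(x⁰), u⟩, ⟨∇g_j(x⁰), v⟩ + g_j°°(x⁰; u, u)) ≦_lex (0,0) for all j ∈ J(x⁰). -/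
open Filter Topology Set
open scoped InnerProductSpace

noncomputable section

/-- `(a₁, a₂) <_lex (0, 0)`. -/
def lexLT (a : ℝ × ℝ) : Prop := a.1 < 0 ∨ (a.1 = 0 ∧ a.2 < 0)

/-- `u` is a critical direction of the problem at `x0`. -/
def Critical {n l m : ℕ} (f : Fin l → EuclideanSpace ℝ (Fin n) → ℝ)
    (g : Fin m → EuclideanSpace ℝ (Fin n) → ℝ)
    (x0 u : EuclideanSpace ℝ (Fin n)) : Prop :=
  (∀ i, ⟪gradient (f i) x0, u⟫_ℝ = 0) ∧
  (∀ j, g j x0 = 0 → ⟪gradient (g j) x0, u⟫_ℝ ≤ 0)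

lemma grad_line_hasDerivAt {n : ℕ} {φ : EuclideanSpace ℝ (Fin n) → ℝ}
    (hφ : Differentiable ℝ φ) (x0 h : EuclideanSpace ℝ (Fin n)) (s : ℝ) :
    HasDerivAt (fun s : ℝ => φ (x0 + s • h)) (⟪gradient φ (x0 + s • h), h⟫_ℝ) s := by
  have h1 : HasFDerivAt φ (InnerProductSpace.toDual ℝ _ (gradient φ (x0 + s • h)))
      (x0 + s • h) := ((hφ _).hasGradientAt).hasFDerivAt
  have h2 : HasDerivAt (fun s : ℝ => x0 + s • h) h s := by
    simpa using ((hasDerivAt_id s).smul_const h).const_add x0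
  have h3 := h1.comp_hasDerivAt s h2
  simp [InnerProductSpace.toDual_apply_apply] at h3 ⊢
  exact h3


lemma lemA {n : ℕ} {φ : EuclideanSpace ℝ (Fin n) → ℝ} (hφ : IsC11 φ)
    (x0 u : EuclideanSpace ℝ (Fin n)) {ε : ℝ} (hε : 0 < ε) :
    ∃ δ > 0, ∀ t : ℝ, 0 < t → t < δ →
      ⟪gradient φ (x0 + t • u), u⟫_ℝ - ⟪gradient φ x0, u⟫_ℝ ≤ (secondDD φ x0 u + ε) * t := by
  obtain ⟨K, s, hs, hK⟩ := hφ.2 x0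
  obtain ⟨r, hr, hball⟩ := Metric.mem_nhds_iff.mp hs
  set Fq : EuclideanSpace ℝ (Fin n) × ℝ → ℝ := fun p =>
    (⟪gradient φ (p.1 + p.2 • u), u⟫_ℝ - ⟪gradient φ p.1, u⟫_ℝ) / p.2 with hFq
  have hδ0 : (0:ℝ) < r / (2 * (‖u‖ + 1)) := by positivity
  have hbdd : ∀ p : EuclideanSpace ℝ (Fin n) × ℝ,
      p ∈ (Metric.ball x0 (r/2)) ×ˢ (Ioo (0:ℝ) (r / (2 * (‖u‖ + 1)))) →
      Fq p ≤ (K : ℝ) * ‖u‖ ^ 2 := by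
    rintro ⟨x, t⟩ ⟨hx, ht0, htδ⟩
    have hxs : x ∈ s := hball (by
      simp only [Metric.mem_ball] at hx ⊢; linarith [hx])
    have htu : ‖t • u‖ < r / 2 := by
      rw [norm_smul, Real.norm_eq_abs, abs_of_pos ht0]
      calc t * ‖u‖ ≤ t * (‖u‖ + 1) := by nlinarith [norm_nonneg u]
        _ < r / (2 * (‖u‖ + 1)) * (‖u‖ + 1) := by
            apply mul_lt_mul_of_pos_right htδ; positivity
        _ = r / 2 := by field_simp
    have hxtu : x + t • u ∈ s := by
      apply hball
      have : dist (x + t • u) x0 ≤ dist (x + t • u) x + dist x x0 := dist_triangle _ _ _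
      have h2 : dist (x + t • u) x = ‖t • u‖ := by
        rw [dist_eq_norm, add_sub_cancel_left]
      simp only [Metric.mem_ball] at hx ⊢
      linarith
    have hlip := hK.dist_le_mul _ hxtu _ hxs
    have hinner : ⟪gradient φ (x + t • u), u⟫_ℝ - ⟪gradient φ x, u⟫_ℝ ≤
        (K:ℝ) * (t * ‖u‖) * ‖u‖ := by
      rw [← inner_sub_left]
      calc ⟪gradient φ (x + t • u) - gradient φ x, u⟫_ℝ
          ≤ ‖gradient φ (x + t • u) - gradient φ x‖ * ‖u‖ := real_inner_le_norm _ _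
        _ ≤ ((K:ℝ) * (t * ‖u‖)) * ‖u‖ := by
            apply mul_le_mul_of_nonneg_right _ (norm_nonneg u)
            have hd : dist (x + t • u) x = t * ‖u‖ := by
              rw [dist_eq_norm, add_sub_cancel_left, norm_smul, Real.norm_eq_abs,
                abs_of_pos ht0]
            rw [hd] at hlip
            exact hlip
    rw [hFq]
    simp only
    rw [div_le_iff₀ ht0]
    calc ⟪gradient φ (x + t • u), u⟫_ℝ - ⟪gradient φ x, u⟫_ℝ
        ≤ (K:ℝ) * (t * ‖u‖) * ‖u‖ := hinner
      _ = (K:ℝ) * ‖u‖ ^ 2 * t := by ring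
  have hmem : (Metric.ball x0 (r/2)) ×ˢ (Ioo (0:ℝ) (r / (2 * (‖u‖ + 1)))) ∈
      (𝓝 x0) ×ˢ (𝓝[>] (0:ℝ)) :=
    Filter.prod_mem_prod (Metric.ball_mem_nhds x0 (by positivity))
      (Ioo_mem_nhdsGT hδ0)
  have hb : IsBoundedUnder (· ≤ ·) ((𝓝 x0) ×ˢ (𝓝[>] (0:ℝ))) Fq :=
    ⟨(K:ℝ) * ‖u‖ ^ 2, eventually_map.mpr (Filter.mem_of_superset hmem hbdd)⟩
  have hlt : Filter.limsup Fq ((𝓝 x0) ×ˢ (𝓝[>] (0:ℝ))) < secondDD φ x0 u + ε := by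
    rw [secondDD]; linarith
  have hev := Filter.eventually_lt_of_limsup_lt hlt hb
  rw [Filter.eventually_iff, Filter.mem_prod_iff] at hev
  obtain ⟨U, hU, V, hV, hUV⟩ := hev
  obtain ⟨δ, hδpos, hIoo⟩ := (mem_nhdsGT_iff_exists_Ioo_subset).mp hV
  refine ⟨δ, hδpos, fun t ht0 htδ => ?_⟩
  have : Fq (x0, t) < secondDD φ x0 u + ε :=
    hUV ⟨mem_of_mem_nhds hU, hIoo ⟨ht0, htδ⟩⟩
  rw [hFq] at this
  simp only at this
  rw [div_lt_iff₀ ht0] at this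
  linarith

set_option maxHeartbeats 1000000 in
lemma lemB {n : ℕ} {φ : EuclideanSpace ℝ (Fin n) → ℝ} (hφ : IsC11 φ)
    (x0 u v : EuclideanSpace ℝ (Fin n)) (hu0 : ⟪gradient φ x0, u⟫_ℝ = 0)
    (t : ℕ → ℝ) (vk : ℕ → EuclideanSpace ℝ (Fin n))
    (htpos : ∀ k, 0 < t k) (ht0 : Tendsto t atTop (𝓝 0))
    (hvk : Tendsto vk atTop (𝓝 v)) {ε : ℝ} (hε : 0 < ε) :
    ∀ᶠ k in atTop, φ (x0 + t k • u + ((1/2) * (t k)^2) • vk k) - φ x0 ≤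
      ((1/2) * (t k)^2) * (⟪gradient φ x0, v⟫_ℝ + secondDD φ x0 u + ε) := by
  obtain ⟨δ, hδ, hA⟩ := lemA hφ x0 u (show (0:ℝ) < ε/4 by linarith)
  obtain ⟨K, s, hs, hK⟩ := hφ.2 x0
  obtain ⟨r, hr, hball⟩ := Metric.mem_nhds_iff.mp hs
  have hgc : Continuous (gradient φ) := hφ.2.continuous
  set D := secondDD φ x0 u with hD
  set G := gradient φ with hG
  set c : ℕ → ℝ := fun k => (1/2) * (t k)^2 with hcdef
  set h : ℕ → EuclideanSpace ℝ (Fin n) := fun k => t k • u + c k • vk k with hhdef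
  have hcpos : ∀ k, 0 < c k := by
    intro k; have := htpos k; simp only [hcdef]; positivity
  have hc0 : Tendsto c atTop (𝓝 0) := by
    have h' : Tendsto (fun k => (1:ℝ)/2 * t k ^ 2) atTop (𝓝 ((1:ℝ)/2 * 0 ^ 2)) :=
      (ht0.pow 2).const_mul _
    norm_num at h'
    exact h'
  have hnvk : Tendsto (fun k => ‖vk k‖) atTop (𝓝 ‖v‖) := hvk.norm
  have hh0 : Tendsto h atTop (𝓝 0) := by
    have := (ht0.smul_const u).add (hc0.smul hvk)
    simpa using this
  set err : ℕ → ℝ := fun k =>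
    ‖G x0‖ * ‖vk k - v‖ + (K:ℝ) * ‖h k‖ * ‖vk k‖ + (K:ℝ) * t k * ‖vk k‖ * ‖u‖ with herrdef
  have herr0 : Tendsto err atTop (𝓝 0) := by
    have T1 := ((hvk.sub (tendsto_const_nhds (x := v))).norm).const_mul ‖G x0‖
    have T2 := (hh0.norm.const_mul ((K:ℝ))).mul hnvk
    have T3 := ((ht0.const_mul ((K:ℝ))).mul hnvk).mul_const ‖u‖
    have := (T1.add T2).add T3
    simpa using this
  have E1 : ∀ᶠ k in atTop, t k < δ := ht0.eventually_lt_const hδ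
  have E2 : ∀ᶠ k in atTop, t k * ‖u‖ < r/2 :=
    (ht0.mul_const ‖u‖).eventually_lt_const (by simpa using (by positivity : (0:ℝ) < r/2))
  have E3 : ∀ᶠ k in atTop, c k * ‖vk k‖ < r/2 :=
    (hc0.mul hnvk).eventually_lt_const (by simpa using (by positivity : (0:ℝ) < r/2))
  have E4 : ∀ᶠ k in atTop, err k ≤ 3*ε/4 :=
    herr0.eventually_le_const (by linarith)
  filter_upwards [E1, E2, E3, E4] with k h1 h2 h3 h4
  have htk := htpos k
  have hck := hcpos k
  have hhnorm : ‖h k‖ ≤ t k * ‖u‖ + c k * ‖vk k‖ := by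
    calc ‖h k‖ ≤ ‖t k • u‖ + ‖c k • vk k‖ := norm_add_le _ _
      _ = t k * ‖u‖ + c k * ‖vk k‖ := by
          rw [norm_smul, norm_smul, Real.norm_eq_abs, Real.norm_eq_abs,
            abs_of_pos htk, abs_of_pos hck]
  have hhr : ‖h k‖ < r := by linarith
  -- ball memberships
  have hmem1 : ∀ s' : ℝ, s' ∈ Set.Icc (0:ℝ) 1 → x0 + s' • h k ∈ s := by
    rintro s' ⟨hs0, hs1⟩
    apply hball
    rw [Metric.mem_ball, dist_eq_norm, add_sub_cancel_left, norm_smul, Real.norm_eq_abs,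
      abs_of_nonneg hs0]
    nlinarith [norm_nonneg (h k)]
  have hmem2 : ∀ s' : ℝ, s' ∈ Set.Icc (0:ℝ) 1 → x0 + (s' * t k) • u ∈ s := by
    rintro s' ⟨hs0, hs1⟩
    apply hball
    rw [Metric.mem_ball, dist_eq_norm, add_sub_cancel_left, norm_smul, Real.norm_eq_abs,
      abs_of_nonneg (by positivity : (0:ℝ) ≤ s' * t k)]
    nlinarith [norm_nonneg u, mul_pos htk (lt_of_lt_of_le (by norm_num : (0:ℝ) < 1) le_rfl)]
  -- abbreviations for the linear bound
  set P : ℝ := (K:ℝ) * (c k * ‖vk k‖) * ‖u‖ with hP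
  set W : ℝ := ⟪G x0, v⟫_ℝ with hW
  set Ek : ℝ := ‖G x0‖ * ‖vk k - v‖ + (K:ℝ) * ‖h k‖ * ‖vk k‖ with hEk
  set a : ℝ := t k * P + c k * (W + Ek) with ha
  set b : ℝ := (D + ε/4) * (t k)^2 with hb
  -- pointwise derivative bound
  have hpt : ∀ s' ∈ Set.Icc (0:ℝ) 1, ⟪G (x0 + s' • h k), h k⟫_ℝ ≤ a + b * s' := by
    intro s' hs'
    obtain ⟨hs0, hs1⟩ := hs'
    have hys : x0 + s' • h k ∈ s := hmem1 s' ⟨hs0, hs1⟩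
    have hzs : x0 + (s' * t k) • u ∈ s := hmem2 s' ⟨hs0, hs1⟩
    have hyz : (x0 + s' • h k) - (x0 + (s' * t k) • u) = (s' * c k) • vk k := by
      simp only [hhdef]; module
    have hlip1 : ‖G (x0 + s' • h k) - G (x0 + (s' * t k) • u)‖ ≤
        (K:ℝ) * ‖(s' * c k) • vk k‖ := by
      have hd : dist (x0 + s' • h k) (x0 + (s' * t k) • u) = ‖(s' * c k) • vk k‖ := by
        rw [dist_eq_norm, hyz]
      calc ‖G (x0 + s' • h k) - G (x0 + (s' * t k) • u)‖
          = dist (G (x0 + s' • h k)) (G (x0 + (s' * t k) • u)) := (dist_eq_norm _ _).symm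
        _ ≤ (K:ℝ) * dist (x0 + s' • h k) (x0 + (s' * t k) • u) := hK.dist_le_mul _ hys _ hzs
        _ = (K:ℝ) * ‖(s' * c k) • vk k‖ := by rw [hd]
    have hB1 : ⟪G (x0 + s' • h k), u⟫_ℝ ≤ (D + ε/4) * (s' * t k) + P := by
      have step1 : ⟪G (x0 + s' • h k), u⟫_ℝ - ⟪G (x0 + (s' * t k) • u), u⟫_ℝ ≤ P := by
        rw [← inner_sub_left]
        calc ⟪G (x0 + s' • h k) - G (x0 + (s' * t k) • u), u⟫_ℝ
            ≤ ‖G (x0 + s' • h k) - G (x0 + (s' * t k) • u)‖ * ‖u‖ := real_inner_le_norm _ _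
          _ ≤ ((K:ℝ) * (c k * ‖vk k‖)) * ‖u‖ := by
              apply mul_le_mul_of_nonneg_right _ (norm_nonneg u)
              calc ‖G (x0 + s' • h k) - G (x0 + (s' * t k) • u)‖
                  ≤ (K:ℝ) * ‖(s' * c k) • vk k‖ := hlip1
                _ ≤ (K:ℝ) * (c k * ‖vk k‖) := by
                    apply mul_le_mul_of_nonneg_left _ (K.coe_nonneg)
                    rw [norm_smul, Real.norm_eq_abs, abs_of_nonneg (by positivity)]
                    nlinarith [mul_nonneg (mul_nonneg (sub_nonneg.mpr hs1) hck.le)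
                      (norm_nonneg (vk k))]
          _ = P := by rw [hP]
      have step2 : ⟪G (x0 + (s' * t k) • u), u⟫_ℝ ≤ (D + ε/4) * (s' * t k) := by
        rcases eq_or_lt_of_le hs0 with heq | hpos
        · rw [← heq]
          simp only [zero_mul, zero_smul, add_zero, mul_zero, hu0, le_refl]
        · have := hA (s' * t k) (by positivity) (by nlinarith)
          rw [hu0] at this
          linarith
      linarith
    have hB2 : ⟪G (x0 + s' • h k), vk k⟫_ℝ ≤ W + Ek := by
      have hx0s : x0 ∈ s := hball (Metric.mem_ball_self hr)
      have hlip2 : ‖G (x0 + s' • h k) - G x0‖ ≤ (K:ℝ) * ‖h k‖ := by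
        have hd2 : dist (x0 + s' • h k) x0 ≤ ‖h k‖ := by
          rw [dist_eq_norm, add_sub_cancel_left, norm_smul, Real.norm_eq_abs,
            abs_of_nonneg hs0]
          nlinarith [norm_nonneg (h k)]
        calc ‖G (x0 + s' • h k) - G x0‖ = dist (G (x0 + s' • h k)) (G x0) :=
              (dist_eq_norm _ _).symm
          _ ≤ (K:ℝ) * dist (x0 + s' • h k) x0 := hK.dist_le_mul _ hys _ hx0s
          _ ≤ (K:ℝ) * ‖h k‖ := mul_le_mul_of_nonneg_left hd2 K.coe_nonneg
      have step1 : ⟪G (x0 + s' • h k), vk k⟫_ℝ - ⟪G x0, vk k⟫_ℝ ≤ (K:ℝ) * ‖h k‖ * ‖vk k‖ := by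
        rw [← inner_sub_left]
        calc ⟪G (x0 + s' • h k) - G x0, vk k⟫_ℝ
            ≤ ‖G (x0 + s' • h k) - G x0‖ * ‖vk k‖ := real_inner_le_norm _ _
          _ ≤ ((K:ℝ) * ‖h k‖) * ‖vk k‖ := by
              apply mul_le_mul_of_nonneg_right _ (norm_nonneg _)
              exact hlip2
          _ = (K:ℝ) * ‖h k‖ * ‖vk k‖ := by ring
      have step2 : ⟪G x0, vk k⟫_ℝ ≤ W + ‖G x0‖ * ‖vk k - v‖ := by
        have : ⟪G x0, vk k⟫_ℝ = W + ⟪G x0, vk k - v⟫_ℝ := by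
          rw [hW, ← inner_add_right]; congr 1; abel
        rw [this]
        have := real_inner_le_norm (G x0) (vk k - v)
        linarith
      rw [hEk]; linarith
    calc ⟪G (x0 + s' • h k), h k⟫_ℝ
        = t k * ⟪G (x0 + s' • h k), u⟫_ℝ + c k * ⟪G (x0 + s' • h k), vk k⟫_ℝ := by
          simp only [hhdef]
          rw [inner_add_right, real_inner_smul_right, real_inner_smul_right]
      _ ≤ t k * ((D + ε/4) * (s' * t k) + P) + c k * (W + Ek) := by
          exact add_le_add (mul_le_mul_of_nonneg_left hB1 (le_of_lt htk))
            (mul_le_mul_of_nonneg_left hB2 (le_of_lt hck))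
      _ = a + b * s' := by rw [ha, hb]; ring
  -- fundamental theorem of calculus
  have hcont : Continuous (fun s' : ℝ => ⟪G (x0 + s' • h k), h k⟫_ℝ) := by
    apply Continuous.inner
    · exact hgc.comp (continuous_const.add (continuous_id.smul continuous_const))
    · exact continuous_const
  have hFTC : φ (x0 + h k) - φ x0 = ∫ s' in (0:ℝ)..1, ⟪G (x0 + s' • h k), h k⟫_ℝ := by
    have hd : ∀ s' ∈ Set.uIcc (0:ℝ) 1,
        HasDerivAt (fun s' : ℝ => φ (x0 + s' • h k)) (⟪G (x0 + s' • h k), h k⟫_ℝ) s' :=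
      fun s' _ => grad_line_hasDerivAt hφ.1 x0 (h k) s'
    have := intervalIntegral.integral_eq_sub_of_hasDerivAt hd
      (hcont.intervalIntegrable 0 1)
    rw [this]
    simp
  have hIle : ∫ s' in (0:ℝ)..1, ⟪G (x0 + s' • h k), h k⟫_ℝ ≤
      ∫ s' in (0:ℝ)..1, (a + b * s') := by
    apply intervalIntegral.integral_mono_on zero_le_one
      (hcont.intervalIntegrable 0 1)
      ((continuous_const.add (continuous_const.mul continuous_id)).intervalIntegrable 0 1)
    intro s' hs'
    exact hpt s' hs'
  have hIval : (∫ s' in (0:ℝ)..1, (a + b * s')) = a + b / 2 := by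
    have hI2 : (∫ s' in (0:ℝ)..1, b * s') = b / 2 := by
      rw [intervalIntegral.integral_const_mul, integral_id]
      ring
    have hI1 : (∫ _ in (0:ℝ)..1, a) = a := by simp
    have hib : IntervalIntegrable (fun s' : ℝ => b * s') MeasureTheory.volume 0 1 :=
      (continuous_const.mul continuous_id).intervalIntegrable 0 1
    rw [intervalIntegral.integral_add intervalIntegrable_const hib, hI1, hI2]
  have hgoal1 : φ (x0 + t k • u + c k • vk k) - φ x0 ≤ a + b / 2 := by
    have heq : x0 + t k • u + c k • vk k = x0 + h k := by
      simp only [hhdef]; abel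
    rw [heq]
    calc φ (x0 + h k) - φ x0 = _ := hFTC
      _ ≤ _ := hIle
      _ = a + b/2 := hIval
  have hfin : a + b / 2 ≤ c k * (W + D + ε) := by
    have hab : a + b / 2 = c k * (W + D + ε/4 + err k) := by
      rw [ha, hb, hP, hEk, herrdef, hcdef]
      simp only
      ring
    rw [hab]
    apply mul_le_mul_of_nonneg_left _ (le_of_lt hck)
    linarith
  calc φ (x0 + t k • u + c k • vk k) - φ x0 ≤ a + b / 2 := hgoal1
    _ ≤ c k * (W + D + ε) := hfin
    _ = c k * (⟪G x0, v⟫_ℝ + D + ε) := by rw [hW]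

lemma secondDD_zero {n : ℕ} (φ : EuclideanSpace ℝ (Fin n) → ℝ)
    (x0 : EuclideanSpace ℝ (Fin n)) : secondDD φ x0 0 = 0 := by
  haveI : ((𝓝 x0) ×ˢ (𝓝[>] (0:ℝ))).NeBot := Filter.prod_neBot.mpr ⟨inferInstance, inferInstance⟩
  have heq : (fun p : EuclideanSpace ℝ (Fin n) × ℝ =>
      (⟪gradient φ (p.1 + p.2 • (0 : EuclideanSpace ℝ (Fin n))),
          (0 : EuclideanSpace ℝ (Fin n))⟫_ℝ
        - ⟪gradient φ p.1, (0 : EuclideanSpace ℝ (Fin n))⟫_ℝ) / p.2) = fun _ => (0:ℝ) := by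
    funext p; simp
  rw [secondDD, heq, Filter.limsup_const]

lemma mainAux {n l m : ℕ}
    (f : Fin l → EuclideanSpace ℝ (Fin n) → ℝ)
    (g : Fin m → EuclideanSpace ℝ (Fin n) → ℝ)
    (hf : ∀ i, IsC11 (f i))
    (Q0 : Set (EuclideanSpace ℝ (Fin n)))
    (x0 : EuclideanSpace ℝ (Fin n))
    (hgeof : Geoffrion Q0 f x0)
    (hreg : ∀ u : EuclideanSpace ℝ (Fin n), Critical f g x0 u →
      L2lin f g x0 u ⊆ ⋂ i : Fin l, tcone2 (Q0 ∩ {x | f i x ≤ f i x0}) x0 u)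
    (u v : EuclideanSpace ℝ (Fin n))
    (hcrit : Critical f g x0 u)
    (hL2 : v ∈ L2lin f g x0 u)
    (i0 : Fin l)
    (hstrict : ⟪gradient (f i0) x0, v⟫_ℝ + secondDD (f i0) x0 u < 0) : False := by
  obtain ⟨hx0Q, _, M, hM, hGeo⟩ := hgeof
  have hT := hreg u hcrit hL2
  rw [Set.mem_iInter] at hT
  obtain ⟨t, vk, htpos, ht0, hvk, hmem⟩ := hT i0
  have hle : ∀ i, ⟪gradient (f i) x0, v⟫_ℝ + secondDD (f i) x0 u ≤ 0 := by
    intro i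
    rcases hL2.1 i with h | ⟨_, h⟩
    · rw [hcrit.1 i] at h; exact absurd h (lt_irrefl 0)
    · exact h
  obtain ⟨δ', hδ'⟩ : ∃ x : ℝ, x = -(⟪gradient (f i0) x0, v⟫_ℝ + secondDD (f i0) x0 u) :=
    ⟨_, rfl⟩
  have hδ'pos : 0 < δ' := by rw [hδ']; linarith
  obtain ⟨ε, hεdef⟩ : ∃ x : ℝ, x = min (δ'/2) (δ'/(4*M)) := ⟨_, rfl⟩
  have hεpos : 0 < ε := by rw [hεdef]; exact lt_min (by linarith) (by positivity)
  have hexp : ∀ᶠ k in atTop, ∀ i,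
      f i (x0 + t k • u + ((1/2) * (t k)^2) • vk k) - f i x0 ≤
      ((1/2) * (t k)^2) * (⟪gradient (f i) x0, v⟫_ℝ + secondDD (f i) x0 u + ε) := by
    rw [Filter.eventually_all]
    intro i
    exact lemB (hf i) x0 u v (hcrit.1 i) t vk htpos ht0 hvk hεpos
  obtain ⟨k, hk⟩ := hexp.exists
  obtain ⟨ck, hck⟩ : ∃ x : ℝ, x = (1/2) * (t k)^2 := ⟨_, rfl⟩
  have hckpos : 0 < ck := by have := htpos k; rw [hck]; positivity
  obtain ⟨xk, hxk⟩ : ∃ x, x = x0 + t k • u + ((1/2) * (t k)^2) • vk k := ⟨_, rfl⟩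
  have hk' : ∀ i, f i xk - f i x0 ≤
      ck * (⟪gradient (f i) x0, v⟫_ℝ + secondDD (f i) x0 u + ε) := by
    intro i; rw [hxk, hck]; exact hk i
  have hxkQ : xk ∈ Q0 := by rw [hxk]; exact (hmem k).1
  have hεle1 : ε ≤ δ'/2 := hεdef ▸ min_le_left _ _
  have hεle2 : ε ≤ δ'/(4*M) := hεdef ▸ min_le_right _ _
  have hnum : ck * (δ'/2) ≤ f i0 x0 - f i0 xk := by
    have h1 := hk' i0
    have h2 : ⟪gradient (f i0) x0, v⟫_ℝ + secondDD (f i0) x0 u = -δ' := by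
      rw [hδ']; ring
    rw [h2] at h1
    have h3 : ck * (-δ' + ε) ≤ ck * (-δ' + δ'/2) :=
      mul_le_mul_of_nonneg_left (by linarith) hckpos.le
    have h4 : ck * (-δ' + δ'/2) = -(ck * (δ'/2)) := by ring
    linarith
  have hflt : f i0 xk < f i0 x0 := by nlinarith
  obtain ⟨j, hjgt, hjratio⟩ := hGeo i0 xk hxkQ hflt
  have hdenpos : 0 < f j xk - f j x0 := sub_pos.mpr hjgt
  have hden : f j xk - f j x0 ≤ ck * ε := by
    have h1 := hk' j
    have h2 := hle j
    have h3 : ck * (⟪gradient (f j) x0, v⟫_ℝ + secondDD (f j) x0 u + ε) ≤ ck * ε :=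
      mul_le_mul_of_nonneg_left (by linarith) hckpos.le
    linarith
  have hnum_le : f i0 x0 - f i0 xk ≤ M * (f j xk - f j x0) :=
    (div_le_iff₀ hdenpos).mp hjratio
  have hMck : M * (ck * (δ'/(4*M))) = ck * δ' / 4 := by
    field_simp
  have hchain : M * (f j xk - f j x0) ≤ ck * δ' / 4 := by
    calc M * (f j xk - f j x0) ≤ M * (ck * ε) :=
          mul_le_mul_of_nonneg_left hden hM.le
      _ ≤ M * (ck * (δ'/(4*M))) := by
          apply mul_le_mul_of_nonneg_left _ hM.le
          exact mul_le_mul_of_nonneg_left hεle2 hckpos.le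
      _ = ck * δ' / 4 := hMck
  nlinarith [mul_pos hckpos hδ'pos]

/-- Theorem 4.2: the primal second-order necessary condition for Geoffrion proper
efficiency under the `(GASORC)` at every critical direction. -/
theorem stmt_3 {n l m : ℕ}
    (f : Fin l → EuclideanSpace ℝ (Fin n) → ℝ)
    (g : Fin m → EuclideanSpace ℝ (Fin n) → ℝ)
    (hf : ∀ i, IsC11 (f i)) (hg : ∀ j, IsC11 (g j))
    (Q0 : Set (EuclideanSpace ℝ (Fin n)))
    (hQ0 : Q0 = {x | ∀ j, g j x ≤ 0})
    (x0 : EuclideanSpace ℝ (Fin n))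
    (hgeof : Geoffrion Q0 f x0)
    (hreg : ∀ u : EuclideanSpace ℝ (Fin n), Critical f g x0 u →
      L2lin f g x0 u ⊆ ⋂ i : Fin l, tcone2 (Q0 ∩ {x | f i x ≤ f i x0}) x0 u) :
    ¬ ∃ u v : EuclideanSpace ℝ (Fin n),
      (∀ i, lexLE (⟪gradient (f i) x0, u⟫_ℝ,
        ⟪gradient (f i) x0, v⟫_ℝ + secondDD (f i) x0 u)) ∧
      (∃ i, lexLT (⟪gradient (f i) x0, u⟫_ℝ,
        ⟪gradient (f i) x0, v⟫_ℝ + secondDD (f i) x0 u)) ∧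
      (∀ j, g j x0 = 0 → lexLE (⟪gradient (g j) x0, u⟫_ℝ,
        ⟪gradient (g j) x0, v⟫_ℝ + secondDD (g j) x0 u)) := by
  rintro ⟨u, v, hLEf, ⟨i0, hLT⟩, hLEg⟩
  by_cases hcase : ∀ i, ⟪gradient (f i) x0, u⟫_ℝ = 0
  · have hcrit : Critical f g x0 u := by
      refine ⟨hcase, fun j hj => ?_⟩
      rcases hLEg j hj with h | ⟨h, _⟩
      exacts [le_of_lt h, le_of_eq h]
    have hL2 : v ∈ L2lin f g x0 u := ⟨hLEf, hLEg⟩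
    have hstrict : ⟪gradient (f i0) x0, v⟫_ℝ + secondDD (f i0) x0 u < 0 := by
      rcases hLT with h | ⟨_, h⟩
      · rw [hcase i0] at h; exact absurd h (lt_irrefl 0)
      · exact h
    exact mainAux f g hf Q0 x0 hgeof hreg u v hcrit hL2 i0 hstrict
  · push_neg at hcase
    obtain ⟨i1, hi1⟩ := hcase
    have hfu_le : ∀ i, ⟪gradient (f i) x0, u⟫_ℝ ≤ 0 := by
      intro i
      rcases hLEf i with h | ⟨h, _⟩
      exacts [le_of_lt h, le_of_eq h]
    have hi1neg : ⟪gradient (f i1) x0, u⟫_ℝ < 0 :=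
      lt_of_le_of_ne (hfu_le i1) hi1
    have hgu_le : ∀ j, g j x0 = 0 → ⟪gradient (g j) x0, u⟫_ℝ ≤ 0 := by
      intro j hj
      rcases hLEg j hj with h | ⟨h, _⟩
      exacts [le_of_lt h, le_of_eq h]
    have hcrit0 : Critical f g x0 0 := by
      refine ⟨fun i => ?_, fun j _ => ?_⟩ <;> simp
    have hL2' : u ∈ L2lin f g x0 0 := by
      constructor
      · intro i
        refine Or.inr ⟨by simp, ?_⟩
        rw [secondDD_zero]
        simpa using hfu_le i
      · intro j hj
        refine Or.inr ⟨by simp, ?_⟩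
        rw [secondDD_zero]
        simpa using hgu_le j hj
    have hstrict : ⟪gradient (f i1) x0, u⟫_ℝ + secondDD (f i1) x0 0 < 0 := by
      rw [secondDD_zero]
      simpa using hi1neg
    exact mainAux f g hf Q0 x0 hgeof hreg 0 u hcrit0 hL2' i1 hstrict
end
end

section
/- Let φ : ℝⁿ → ℝ be C^{1,1}, let x⁰, u, w ∈ ℝⁿ, let t_k ↓ 0 be a positive sequence converging to 0 and wᵏ → w a sequence in ℝⁿ, and set xᵏ := x⁰ + t_k u + (1/2) t_k² wᵏ. Then limsup_{k → ∞} (φ(xᵏ) − φ(x⁰) − t_k ⟨∇φ(x⁰), u⟩)/((1/2) t_k²) ≤ ⟨∇φ(x⁰), w⟩ + φ°°(x⁰; u, u). -/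
open Filter Topology Set
open scoped InnerProductSpace

noncomputable section

section aux
variable {n : ℕ}

private lemma hasDerivAt_line_s5 {φ : EuclideanSpace ℝ (Fin n) → ℝ} (hd : Differentiable ℝ φ)
    (x v : EuclideanSpace ℝ (Fin n)) (s : ℝ) :
    HasDerivAt (fun s : ℝ => φ (x + s • v)) ⟪gradient φ (x + s • v), v⟫_ℝ s := by
  have hline : HasDerivAt (fun s : ℝ => x + s • v) v s := by
    simpa using ((hasDerivAt_id s).smul_const v).const_add x
  have hφ' := (hd (x + s • v)).hasGradientAt.hasFDerivAt
  have := hφ'.comp_hasDerivAt s hline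
  simp [InnerProductSpace.toDual_apply_apply] at this ⊢; exact this

private lemma core_upper {φ : EuclideanSpace ℝ (Fin n) → ℝ} (hd : Differentiable ℝ φ)
    (x v : EuclideanSpace ℝ (Fin n)) (T c : ℝ) (hT : 0 ≤ T)
    (h : ∀ s ∈ Ioo (0:ℝ) T,
      ⟪gradient φ (x + s • v), v⟫_ℝ - ⟪gradient φ x, v⟫_ℝ ≤ c * s) :
    φ (x + T • v) - φ x - T * ⟪gradient φ x, v⟫_ℝ ≤ c * T ^ 2 / 2 := by
  set a := ⟪gradient φ x, v⟫_ℝ with ha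
  set ψ : ℝ → ℝ := fun s => φ (x + s • v) - s * a - c / 2 * s ^ 2 with hψdef
  have hψ : ∀ s : ℝ, HasDerivAt ψ (⟪gradient φ (x + s • v), v⟫_ℝ - a - c * s) s := by
    intro s
    have h1 := hasDerivAt_line_s5 hd x v s
    have h2 : HasDerivAt (fun s : ℝ => s * a) a s := by
      simpa using (hasDerivAt_id s).mul_const a
    have h3 : HasDerivAt (fun s : ℝ => c / 2 * s ^ 2) (c * s) s := by
      have := (hasDerivAt_pow 2 s).const_mul (c / 2)
      exact this.congr_deriv (by ring)
    exact (h1.sub h2).sub h3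
  have hanti : AntitoneOn ψ (Icc 0 T) := by
    apply antitoneOn_of_deriv_nonpos (convex_Icc 0 T)
    · exact fun s _ => ((hψ s).differentiableAt).continuousAt.continuousWithinAt
    · exact fun s hs => ((hψ s).differentiableAt).differentiableWithinAt
    · intro s hs
      rw [interior_Icc] at hs
      rw [(hψ s).deriv]
      have := h s hs
      linarith
  have hle := hanti (left_mem_Icc.2 hT) (right_mem_Icc.2 hT) hT
  have h0 : ψ 0 = φ x := by simp [hψdef]
  have hTT : ψ T = φ (x + T • v) - T * a - c / 2 * T ^ 2 := rfl
  rw [h0, hTT] at hle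
  linarith

private lemma core_lower {φ : EuclideanSpace ℝ (Fin n) → ℝ} (hd : Differentiable ℝ φ)
    (x v : EuclideanSpace ℝ (Fin n)) (T c : ℝ) (hT : 0 ≤ T)
    (h : ∀ s ∈ Ioo (0:ℝ) T,
      ⟪gradient φ x, v⟫_ℝ - ⟪gradient φ (x + s • v), v⟫_ℝ ≤ c * s) :
    φ x + T * ⟪gradient φ x, v⟫_ℝ - φ (x + T • v) ≤ c * T ^ 2 / 2 := by
  set a := ⟪gradient φ x, v⟫_ℝ with ha
  set ψ : ℝ → ℝ := fun s => φ (x + s • v) - s * a + c / 2 * s ^ 2 with hψdef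
  have hψ : ∀ s : ℝ, HasDerivAt ψ (⟪gradient φ (x + s • v), v⟫_ℝ - a + c * s) s := by
    intro s
    have h1 := hasDerivAt_line_s5 hd x v s
    have h2 : HasDerivAt (fun s : ℝ => s * a) a s := by
      simpa using (hasDerivAt_id s).mul_const a
    have h3 : HasDerivAt (fun s : ℝ => c / 2 * s ^ 2) (c * s) s := by
      have := (hasDerivAt_pow 2 s).const_mul (c / 2)
      exact this.congr_deriv (by ring)
    exact (h1.sub h2).add h3
  have hmono : MonotoneOn ψ (Icc 0 T) := by
    apply monotoneOn_of_deriv_nonneg (convex_Icc 0 T)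
    · exact fun s _ => ((hψ s).differentiableAt).continuousAt.continuousWithinAt
    · exact fun s hs => ((hψ s).differentiableAt).differentiableWithinAt
    · intro s hs
      rw [interior_Icc] at hs
      rw [(hψ s).deriv]
      have := h s hs
      linarith
  have hle := hmono (left_mem_Icc.2 hT) (right_mem_Icc.2 hT) hT
  have h0 : ψ 0 = φ x := by simp [hψdef]
  have hTT : ψ T = φ (x + T • v) - T * a + c / 2 * T ^ 2 := rfl
  rw [h0, hTT] at hle
  linarith

private lemma quad_bound {φ : EuclideanSpace ℝ (Fin n) → ℝ} (hd : Differentiable ℝ φ)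
    (x v : EuclideanSpace ℝ (Fin n)) (K : NNReal) (δ : ℝ)
    (hK : LipschitzOnWith K (gradient φ) (Metric.ball x δ)) (hv : ‖v‖ < δ) :
    |φ (x + v) - φ x - ⟪gradient φ x, v⟫_ℝ| ≤ (K : ℝ) * ‖v‖ ^ 2 / 2 := by
  have hkey : ∀ s ∈ Ioo (0:ℝ) 1,
      |⟪gradient φ (x + s • v), v⟫_ℝ - ⟪gradient φ x, v⟫_ℝ| ≤ ((K : ℝ) * ‖v‖ ^ 2) * s := by
    intro s hs
    have hmem : x + s • v ∈ Metric.ball x δ := by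
      rw [Metric.mem_ball, dist_eq_norm, add_sub_cancel_left, norm_smul,
        Real.norm_eq_abs, abs_of_pos hs.1]
      nlinarith [norm_nonneg v, hs.1, hs.2, hv, lt_of_le_of_lt (norm_nonneg v) hv]
    have hx : x ∈ Metric.ball x δ := by
      rw [Metric.mem_ball, dist_self]
      exact lt_of_le_of_lt (norm_nonneg v) hv
    have hdist := hK.dist_le_mul _ hmem _ hx
    rw [dist_eq_norm, dist_eq_norm, add_sub_cancel_left, norm_smul, Real.norm_eq_abs,
      abs_of_pos hs.1] at hdist
    calc |⟪gradient φ (x + s • v), v⟫_ℝ - ⟪gradient φ x, v⟫_ℝ|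
        = |⟪gradient φ (x + s • v) - gradient φ x, v⟫_ℝ| := by rw [inner_sub_left]
      _ ≤ ‖gradient φ (x + s • v) - gradient φ x‖ * ‖v‖ := abs_real_inner_le_norm _ _
      _ ≤ ((K : ℝ) * (s * ‖v‖)) * ‖v‖ := by
          apply mul_le_mul_of_nonneg_right _ (norm_nonneg v)
          exact hdist
      _ = ((K : ℝ) * ‖v‖ ^ 2) * s := by ring
  have hu := core_upper hd x v 1 ((K : ℝ) * ‖v‖ ^ 2) zero_le_one
    (fun s hs => (abs_le.1 (hkey s hs)).2)
  have hl := core_lower hd x v 1 ((K : ℝ) * ‖v‖ ^ 2) zero_le_one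
    (fun s hs => by have := (abs_le.1 (hkey s hs)).1; linarith)
  rw [one_smul] at hu hl
  rw [abs_le]
  constructor <;> nlinarith

end aux

set_option maxHeartbeats 1000000 in
/-- The key second-order expansion estimate used in the proofs of Proposition 3.1
and Theorem 4.2. -/
theorem stmt_5 {n : ℕ} (φ : EuclideanSpace ℝ (Fin n) → ℝ) (hφ : IsC11 φ)
    (x0 u w : EuclideanSpace ℝ (Fin n))
    (t : ℕ → ℝ) (htpos : ∀ k, 0 < t k) (ht0 : Tendsto t atTop (𝓝 0))
    (wk : ℕ → EuclideanSpace ℝ (Fin n)) (hwk : Tendsto wk atTop (𝓝 w)) :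
    Filter.limsup (fun k : ℕ =>
        (φ (x0 + t k • u + ((1 / 2) * (t k) ^ 2) • wk k) - φ x0
            - t k * ⟪gradient φ x0, u⟫_ℝ) / ((1 / 2) * (t k) ^ 2)) atTop
      ≤ ⟪gradient φ x0, w⟫_ℝ + secondDD φ x0 u := by
  obtain ⟨hd, hlip⟩ := hφ
  obtain ⟨K, s0, hs0, hKlip⟩ := hlip x0
  obtain ⟨δ, hδpos, hball⟩ := Metric.mem_nhds_iff.1 hs0
  have hK : LipschitzOnWith K (gradient φ) (Metric.ball x0 δ) := hKlip.mono hball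
  set A := ⟪gradient φ x0, w⟫_ℝ with hA
  set g : ℕ → ℝ := fun k =>
    (φ (x0 + t k • u + ((1 / 2) * (t k) ^ 2) • wk k) - φ x0
        - t k * ⟪gradient φ x0, u⟫_ℝ) / ((1 / 2) * (t k) ^ 2) with hg
  set r : ℕ → ℝ := fun k => (1 / 2) * (t k) ^ 2 with hrdef
  have hrpos : ∀ k, 0 < r k := fun k => by
    have := htpos k; simp only [hrdef]; positivity
  set y : ℕ → EuclideanSpace ℝ (Fin n) := fun k => x0 + r k • wk k with hydef
  -- limits
  have hr0 : Tendsto r atTop (𝓝 0) := by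
    have : Tendsto (fun k => (1/2 : ℝ) * (t k * t k)) atTop (𝓝 ((1/2 : ℝ) * (0 * 0))) :=
      tendsto_const_nhds.mul (ht0.mul ht0)
    simpa [hrdef, sq] using this
  have hv0 : Tendsto (fun k => r k • wk k) atTop (𝓝 (0 : EuclideanSpace ℝ (Fin n))) := by
    have := hr0.smul hwk
    simpa using this
  have hy0 : Tendsto y atTop (𝓝 x0) := by
    have := (tendsto_const_nhds (x := x0) (f := atTop)).add hv0
    simpa [hydef] using this
  have hwbd : ∀ᶠ k in atTop, ‖wk k‖ ≤ ‖w‖ + 1 :=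
    hwk.norm.eventually_le_const (lt_add_one _)
  -- boundedness of the quotient Q near (x0, 0+)
  set Q : (EuclideanSpace ℝ (Fin n)) × ℝ → ℝ := fun p =>
    (⟪gradient φ (p.1 + p.2 • u), u⟫_ℝ - ⟪gradient φ p.1, u⟫_ℝ) / p.2 with hQdef
  set ε0 : ℝ := δ / (2 * (‖u‖ + 1)) with hε0def
  have hε0pos : 0 < ε0 := by positivity
  have hε0eq : ε0 * (‖u‖ + 1) = δ / 2 := by
    rw [hε0def]; field_simp
  have hQabs : ∀ p : (EuclideanSpace ℝ (Fin n)) × ℝ, p.1 ∈ Metric.ball x0 (δ / 2) →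
      p.2 ∈ Ioo (0:ℝ) ε0 → |Q p| ≤ (K : ℝ) * ‖u‖ ^ 2 := by
    rintro ⟨x, s⟩ hx hs
    simp only [Metric.mem_ball] at hx
    obtain ⟨hs1, hs2⟩ := hs
    have hsu : ‖s • u‖ = s * ‖u‖ := by
      rw [norm_smul, Real.norm_eq_abs, abs_of_pos hs1]
    have hmem2 : x + s • u ∈ Metric.ball x0 δ := by
      rw [Metric.mem_ball]
      calc dist (x + s • u) x0 ≤ dist (x + s • u) x + dist x x0 := dist_triangle _ _ _
        _ = ‖s • u‖ + dist x x0 := by rw [dist_eq_norm, add_sub_cancel_left]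
        _ < δ := by
            rw [hsu]
            nlinarith [norm_nonneg u, hs1, hs2, hε0eq, hx]
    have hmem1 : x ∈ Metric.ball x0 δ := by
      rw [Metric.mem_ball]; linarith
    have hdist := hK.dist_le_mul _ hmem2 _ hmem1
    rw [dist_eq_norm, dist_eq_norm, add_sub_cancel_left, hsu] at hdist
    have hnum : |⟪gradient φ (x + s • u), u⟫_ℝ - ⟪gradient φ x, u⟫_ℝ|
        ≤ (K : ℝ) * ‖u‖ ^ 2 * s := by
      calc |⟪gradient φ (x + s • u), u⟫_ℝ - ⟪gradient φ x, u⟫_ℝ|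
          = |⟪gradient φ (x + s • u) - gradient φ x, u⟫_ℝ| := by rw [inner_sub_left]
        _ ≤ ‖gradient φ (x + s • u) - gradient φ x‖ * ‖u‖ := abs_real_inner_le_norm _ _
        _ ≤ ((K : ℝ) * (s * ‖u‖)) * ‖u‖ :=
            mul_le_mul_of_nonneg_right hdist (norm_nonneg u)
        _ = (K : ℝ) * ‖u‖ ^ 2 * s := by ring
    have : |Q (x, s)| = |⟪gradient φ (x + s • u), u⟫_ℝ - ⟪gradient φ x, u⟫_ℝ| / s := by
      rw [hQdef]; simp only [abs_div, abs_of_pos hs1]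
    rw [this, div_le_iff₀ hs1]
    exact hnum
  have hQev : ∀ᶠ p in (𝓝 x0) ×ˢ (𝓝[>] (0:ℝ)), Q p ≤ (K : ℝ) * ‖u‖ ^ 2 := by
    have hmem : (Metric.ball x0 (δ / 2)) ×ˢ (Ioo (0:ℝ) ε0) ∈ (𝓝 x0) ×ˢ (𝓝[>] (0:ℝ)) :=
      prod_mem_prod (Metric.ball_mem_nhds _ (by positivity))
        (Ioo_mem_nhdsGT_of_mem ⟨le_refl 0, hε0pos⟩)
    filter_upwards [hmem] with p hp
    exact (le_abs_self _).trans (hQabs p hp.1 hp.2)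
  have hQbdd : IsBoundedUnder (· ≤ ·) ((𝓝 x0) ×ˢ (𝓝[>] (0:ℝ))) Q :=
    isBoundedUnder_of_eventually_le hQev
  -- lower bound on g (coboundedness)
  have hVtend : Tendsto (fun k => t k • u + r k • wk k) atTop
      (𝓝 (0 : EuclideanSpace ℝ (Fin n))) := by
    have h1 : Tendsto (fun k => t k • u) atTop (𝓝 ((0:ℝ) • u)) :=
      ht0.smul tendsto_const_nhds
    have := h1.add hv0
    simpa using this
  have hVlt : ∀ᶠ k in atTop, ‖t k • u + r k • wk k‖ < δ :=
    hVtend.norm.eventually_lt_const (by simpa using hδpos)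
  have htle1 : ∀ᶠ k in atTop, t k ≤ 1 := ht0.eventually_le_const one_pos
  have hglow : ∀ᶠ k in atTop,
      ⟪gradient φ x0, wk k⟫_ℝ - (K : ℝ) * (‖u‖ + ‖w‖ + 1) ^ 2 ≤ g k := by
    filter_upwards [hVlt, hwbd, htle1] with k h1 h2 h3
    set V := t k • u + r k • wk k with hVdef
    have hq := quad_bound hd x0 V K δ hK h1
    have hVin : ⟪gradient φ x0, V⟫_ℝ
        = t k * ⟪gradient φ x0, u⟫_ℝ + r k * ⟪gradient φ x0, wk k⟫_ℝ := by
      rw [hVdef, inner_add_right, real_inner_smul_right, real_inner_smul_right]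
    have hass : x0 + t k • u + r k • wk k = x0 + V := by rw [hVdef, add_assoc]
    have hVnorm : ‖V‖ ≤ t k * (‖u‖ + ‖w‖ + 1) := by
      have hna : ‖V‖ ≤ ‖t k • u‖ + ‖r k • wk k‖ := norm_add_le _ _
      have e1 : ‖t k • u‖ = t k * ‖u‖ := by
        rw [norm_smul, Real.norm_eq_abs, abs_of_pos (htpos k)]
      have e2 : ‖r k • wk k‖ = r k * ‖wk k‖ := by
        rw [norm_smul, Real.norm_eq_abs, abs_of_pos (hrpos k)]
      have hrt : r k ≤ t k := by
        have ht := htpos k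
        have : r k = 1/2 * t k ^ 2 := rfl
        nlinarith
      have hw0 : (0:ℝ) ≤ ‖wk k‖ := norm_nonneg _
      have hprod : r k * ‖wk k‖ ≤ t k * (‖w‖ + 1) :=
        mul_le_mul hrt h2 hw0 (htpos k).le
      have hid : t k * ‖u‖ + t k * (‖w‖ + 1) = t k * (‖u‖ + ‖w‖ + 1) := by ring
      linarith [hna, e1.le, e2.le, e1.ge, e2.ge]
    have hgk : g k = (φ (x0 + V) - φ x0 - t k * ⟪gradient φ x0, u⟫_ℝ) / r k := by
      rw [hg]
      simp only []
      rw [hass]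
    rw [hgk, le_div_iff₀ (hrpos k)]
    have hlow := (abs_le.1 hq).1
    have hVsq : ‖V‖ ^ 2 ≤ t k ^ 2 * (‖u‖ + ‖w‖ + 1) ^ 2 := by
      have h0 : (0:ℝ) ≤ ‖V‖ := norm_nonneg _
      calc ‖V‖ ^ 2 ≤ (t k * (‖u‖ + ‖w‖ + 1)) ^ 2 := by
            apply sq_le_sq' (by linarith) hVnorm
        _ = t k ^ 2 * (‖u‖ + ‖w‖ + 1) ^ 2 := by ring
    have hrk : r k = 1/2 * t k ^ 2 := rfl
    have hVsq' : (K : ℝ) / 2 * ‖V‖ ^ 2 ≤ (K : ℝ) / 2 * (t k ^ 2 * (‖u‖ + ‖w‖ + 1) ^ 2) :=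
      mul_le_mul_of_nonneg_left hVsq (by positivity)
    have hbr : (K : ℝ) * (‖u‖ + ‖w‖ + 1) ^ 2 * r k
        = (K : ℝ) / 2 * (t k ^ 2 * (‖u‖ + ‖w‖ + 1) ^ 2) := by rw [hrk]; ring
    linarith [hlow, hVin, hVsq', hbr]
  have hcob : IsCoboundedUnder (· ≤ ·) atTop g := by
    have hin : Tendsto (fun k => ⟪gradient φ x0, wk k⟫_ℝ) atTop (𝓝 A) :=
      tendsto_const_nhds.inner hwk
    have hin' : ∀ᶠ k in atTop, A - 1 ≤ ⟪gradient φ x0, wk k⟫_ℝ := by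
      have := hin.eventually_const_le (show A - 1 < A by linarith)
      exact this
    apply IsBoundedUnder.isCoboundedUnder_le
    apply isBoundedUnder_of_eventually_ge
      (a := A - 1 - (K : ℝ) * (‖u‖ + ‖w‖ + 1) ^ 2)
    filter_upwards [hglow, hin'] with k h1 h2
    linarith
  -- the key estimate for every c > secondDD
  have key : ∀ c : ℝ, secondDD φ x0 u < c → limsup g atTop ≤ A + c := by
    intro c hc
    have hev : ∀ᶠ p in (𝓝 x0) ×ˢ (𝓝[>] (0:ℝ)), Q p < c :=
      eventually_lt_of_limsup_lt hc hQbdd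
    rw [eventually_prod_iff] at hev
    obtain ⟨pa, hpa, pb, hpb, hpab⟩ := hev
    obtain ⟨δ1, hδ1, hpa'⟩ := Metric.eventually_nhds_iff.1 hpa
    have hpb' : ∀ᶠ s in 𝓝 (0:ℝ), s ∈ Ioi (0:ℝ) → pb s := eventually_nhdsWithin_iff.1 hpb
    obtain ⟨ε1, hε1, hpbb⟩ := Metric.eventually_nhds_iff.1 hpb'
    set h : ℕ → ℝ := fun k => c + (K : ℝ)/2 * r k * ‖wk k‖ ^ 2
      + (K : ℝ) * t k * ‖wk k‖ * ‖u‖ + ⟪gradient φ x0, wk k⟫_ℝ with hhdef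
    have hyev : ∀ᶠ k in atTop, dist (y k) x0 < δ1 := by
      have := Metric.tendsto_nhds.1 hy0 δ1 hδ1
      exact this
    have hvev : ∀ᶠ k in atTop, ‖r k • wk k‖ < δ / 2 :=
      hv0.norm.eventually_lt_const (by simpa using (by positivity : (0:ℝ) < δ / 2))
    have htev : ∀ᶠ k in atTop, t k < ε1 := ht0.eventually_lt_const hε1
    have hgh : ∀ᶠ k in atTop, g k ≤ h k := by
      filter_upwards [hyev, hvev, htev] with k h1 h2 h3
      -- Est1 : the u-direction estimate at base point y k
      have E1 : φ (y k + t k • u) - φ (y k) - t k * ⟪gradient φ (y k), u⟫_ℝ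
          ≤ c * t k ^ 2 / 2 := by
        apply core_upper hd (y k) u (t k) c (htpos k).le
        intro s hs
        have hpas : pa (y k) := hpa' h1
        have hpbs : pb s := by
          apply hpbb
          · rw [Real.dist_eq, sub_zero, abs_of_pos hs.1]
            exact lt_trans hs.2 h3
          · exact hs.1
        have hQk : Q (y k, s) < c := hpab hpas hpbs
        have : (⟪gradient φ (y k + s • u), u⟫_ℝ - ⟪gradient φ (y k), u⟫_ℝ) / s < c := hQk
        rw [div_lt_iff₀ hs.1] at this
        linarith
      -- Est2 : quadratic bound from x0 to y k
      have E2 : |φ (y k) - φ x0 - ⟪gradient φ x0, r k • wk k⟫_ℝ|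
          ≤ (K : ℝ) * ‖r k • wk k‖ ^ 2 / 2 := by
        have := quad_bound hd x0 (r k • wk k) K δ hK (by linarith)
        simpa [hydef] using this
      -- Est3 : gradient difference estimate
      have E3 : |⟪gradient φ (y k), u⟫_ℝ - ⟪gradient φ x0, u⟫_ℝ|
          ≤ (K : ℝ) * ‖r k • wk k‖ * ‖u‖ := by
        have hdyx : dist (y k) x0 = ‖r k • wk k‖ := by
          rw [hydef]
          simp [dist_eq_norm, add_sub_cancel_left]
        have hmemy : y k ∈ Metric.ball x0 δ := by
          rw [Metric.mem_ball, hdyx]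
          linarith
        have hmemx : x0 ∈ Metric.ball x0 δ := Metric.mem_ball_self hδpos
        have hdist := hK.dist_le_mul _ hmemy _ hmemx
        rw [dist_eq_norm, hdyx] at hdist
        calc |⟪gradient φ (y k), u⟫_ℝ - ⟪gradient φ x0, u⟫_ℝ|
            = |⟪gradient φ (y k) - gradient φ x0, u⟫_ℝ| := by rw [inner_sub_left]
          _ ≤ ‖gradient φ (y k) - gradient φ x0‖ * ‖u‖ := abs_real_inner_le_norm _ _
          _ ≤ ((K : ℝ) * ‖r k • wk k‖) * ‖u‖ :=
              mul_le_mul_of_nonneg_right hdist (norm_nonneg u)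
    -- combine
      have hxkeq : x0 + t k • u + r k • wk k = y k + t k • u := by
        rw [hydef]; exact add_right_comm _ _ _
      have hgk : g k = (φ (y k + t k • u) - φ x0 - t k * ⟪gradient φ x0, u⟫_ℝ) / r k := by
        rw [hg]
        simp only []
        rw [hxkeq]
      have hvn : ‖r k • wk k‖ = r k * ‖wk k‖ := by
        rw [norm_smul, Real.norm_eq_abs, abs_of_pos (hrpos k)]
      have hinr : ⟪gradient φ x0, r k • wk k⟫_ℝ = r k * ⟪gradient φ x0, wk k⟫_ℝ :=
        real_inner_smul_right _ _ _
      rw [hgk, div_le_iff₀ (hrpos k)]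
      have hE2u := (abs_le.1 E2).2
      have hE3u := (abs_le.1 E3).2
      have hE3t : t k * (⟪gradient φ (y k), u⟫_ℝ - ⟪gradient φ x0, u⟫_ℝ)
          ≤ t k * ((K : ℝ) * ‖r k • wk k‖ * ‖u‖) :=
        mul_le_mul_of_nonneg_left hE3u (htpos k).le
      have hrk : r k = 1/2 * t k ^ 2 := rfl
      rw [hvn] at hE2u hE3t
      rw [hinr] at hE2u
      rw [hhdef]
      simp only []
      have hcr : c * r k = c * t k ^ 2 / 2 := by rw [hrk]; ring
      linarith [E1, hE2u, hE3t, hcr]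
    have hhtend : Tendsto h atTop (𝓝 (c + (K : ℝ)/2 * 0 * ‖w‖ ^ 2
        + (K : ℝ) * 0 * ‖w‖ * ‖u‖ + A)) := by
      apply Tendsto.add
      apply Tendsto.add
      apply Tendsto.add
      · exact tendsto_const_nhds
      · exact (tendsto_const_nhds.mul hr0).mul ((hwk.norm).pow 2)
      · exact ((tendsto_const_nhds.mul ht0).mul hwk.norm).mul tendsto_const_nhds
      · exact tendsto_const_nhds.inner hwk
    have hlim : limsup h atTop = c + (K : ℝ)/2 * 0 * ‖w‖ ^ 2
        + (K : ℝ) * 0 * ‖w‖ * ‖u‖ + A := hhtend.limsup_eq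
    have := limsup_le_limsup hgh hcob hhtend.isBoundedUnder_le
    rw [hlim] at this
    calc limsup g atTop ≤ _ := this
      _ = A + c := by ring
  -- conclude
  by_contra hlt
  push_neg at hlt
  obtain ⟨m, hm1, hm2⟩ := exists_between hlt
  have hkey := key (m - A) (by linarith)
  linarith
end
end

section
/- Let f₁(x) := x₂, f₂(x) := x₁ + x₂², f₃(x) := −x₁ − x₁|x₁| + x₂² for x = (x₁, x₂) ∈ ℝ². Then x⁰ := (0,0) is NOT a Geoffrion properly efficient solution of the problem of minimizing f = (f₁, f₂, f₃) over ℝ²: for every M > 0 there exists x ∈ ℝ² with f₁(x) < f₁(x⁰) such that for every j with f_j(x) > f_j(x⁰) one has (f₁(x⁰) − f₁(x))/(f_j(x) − f_j(x⁰)) > M. (Indeed, the points x = (0, −a) with a ↓ 0 satisfy f₁(x) = −a < 0, f₂(x) = f₃(x) = a² > 0, and the ratio 1/a tends to +∞.) -/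
open Filter Topology Set

noncomputable section

/-- The objective family `f = (f₁, f₂, f₃)` of Example 3.1 / Example 4.2:
`f₁(x) = x₂`, `f₂(x) = x₁ + x₂²`, `f₃(x) = −x₁ − x₁|x₁| + x₂²`. -/
def ff : Fin 3 → ℝ × ℝ → ℝ :=
  ![fun x => x.2, fun x => x.1 + x.2 ^ 2, fun x => -x.1 - x.1 * |x.1| + x.2 ^ 2]

/-- Example 4.2: `x⁰ = (0,0)` is not a Geoffrion properly efficient solution of the
problem of minimizing `f = (f₁, f₂, f₃)` over `ℝ²`. -/
theorem stmt_13 :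
    ∀ M : ℝ, 0 < M → ∃ x : ℝ × ℝ, ff 0 x < ff 0 (0, 0) ∧
      ∀ j : Fin 3, ff j (0, 0) < ff j x →
        M < (ff 0 (0, 0) - ff 0 x) / (ff j x - ff j (0, 0)) := by
  intro M hM
  have hMi : 0 < M⁻¹ := inv_pos.mpr hM
  have hc : M * M⁻¹ = 1 := mul_inv_cancel₀ hM.ne'
  refine ⟨(0, -(1 / (2 * M))), ?_, ?_⟩
  · simp [ff]; positivity
  · intro j hj
    fin_cases j
    · simp [ff] at hj; linarith
    · simp [ff] at hj ⊢
      rw [lt_div_iff₀ (by positivity)]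
      nlinarith
    · simp only [ff, Matrix.cons_val_two, Matrix.tail_cons, Matrix.head_cons] at hj ⊢
      norm_num at hj ⊢
      rw [lt_div_iff₀ (by positivity)]
      nlinarith
end
end

section
/- Consider the function h(s) := 4 + sin(ln|s|) + 3 cos(ln|s|) for s ∈ ℝ \ {0}. Then liminf_{s → 0, s ≠ 0} h(s) = 4 − √10 and limsup_{s → 0, s ≠ 0} h(s) = 4 + √10. -/
open Filter Topology

private lemma sq10 : Real.sqrt 10 * Real.sqrt 10 = 10 :=
  Real.mul_self_sqrt (by norm_num)

private lemma bound_hi (x : ℝ) : Real.sin x + 3 * Real.cos x ≤ Real.sqrt 10 := by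
  nlinarith [Real.sin_sq_add_cos_sq x, sq_nonneg (3 * Real.sin x - Real.cos x),
    sq_nonneg (Real.sin x + 3 * Real.cos x - Real.sqrt 10), sq10,
    Real.sqrt_nonneg 10]

private lemma bound_lo (x : ℝ) : -Real.sqrt 10 ≤ Real.sin x + 3 * Real.cos x := by
  nlinarith [Real.sin_sq_add_cos_sq x, sq_nonneg (3 * Real.sin x - Real.cos x),
    sq_nonneg (Real.sin x + 3 * Real.cos x + Real.sqrt 10), sq10,
    Real.sqrt_nonneg 10]

private lemma seq_tendsto (x : ℝ) :
    Tendsto (fun n : ℕ => Real.exp (x - n * (2 * Real.pi))) atTop (𝓝[≠] (0 : ℝ)) := by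
  rw [tendsto_nhdsWithin_iff]
  constructor
  · apply Real.tendsto_exp_atBot.comp
    apply tendsto_atBot_add_const_left
    apply tendsto_neg_atTop_atBot.comp
    exact Tendsto.atTop_mul_const (by positivity) tendsto_natCast_atTop_atTop
  · exact Eventually.of_forall fun n => (Real.exp_pos _).ne'

private lemma seq_val (x : ℝ) (n : ℕ) :
    Real.sin (Real.log |Real.exp (x - n * (2 * Real.pi))|) = Real.sin x ∧
    Real.cos (Real.log |Real.exp (x - n * (2 * Real.pi))|) = Real.cos x := by
  rw [abs_of_pos (Real.exp_pos _), Real.log_exp]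
  exact ⟨Real.sin_periodic.sub_nat_mul_eq n, Real.cos_periodic.sub_nat_mul_eq n⟩

private lemma theta_val :
    Real.sin (Real.arcsin (1 / Real.sqrt 10)) +
      3 * Real.cos (Real.arcsin (1 / Real.sqrt 10)) = Real.sqrt 10 := by
  have h10 : (0:ℝ) < Real.sqrt 10 := Real.sqrt_pos.mpr (by norm_num)
  have h1 : Real.sin (Real.arcsin (1 / Real.sqrt 10)) = 1 / Real.sqrt 10 := by
    apply Real.sin_arcsin
    · exact le_trans (by norm_num : (-1:ℝ) ≤ 0) (by positivity)
    · rw [div_le_one h10]; nlinarith [sq10]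
  have h2 : Real.cos (Real.arcsin (1 / Real.sqrt 10)) = 3 / Real.sqrt 10 := by
    rw [Real.cos_arcsin]
    rw [show 1 - (1 / Real.sqrt 10) ^ 2 = (3 / Real.sqrt 10) ^ 2 by
      field_simp; nlinarith [sq10]]
    exact Real.sqrt_sq (by positivity)
  rw [h1, h2]
  field_simp
  nlinarith [sq10]

/-- The extreme limiting values of `h(s) = 4 + sin(ln|s|) + 3 cos(ln|s|)` as `s → 0`,
`s ≠ 0`. -/
theorem stmt_15 :
    Filter.liminf
        (fun s : ℝ => 4 + Real.sin (Real.log |s|) + 3 * Real.cos (Real.log |s|))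
        (𝓝[≠] (0 : ℝ)) = 4 - Real.sqrt 10 ∧
    Filter.limsup
        (fun s : ℝ => 4 + Real.sin (Real.log |s|) + 3 * Real.cos (Real.log |s|))
        (𝓝[≠] (0 : ℝ)) = 4 + Real.sqrt 10 := by
  set f : ℝ → ℝ := fun s => 4 + Real.sin (Real.log |s|) + 3 * Real.cos (Real.log |s|) with hf
  have hub : ∀ s, f s ≤ 4 + Real.sqrt 10 := fun s => by
    have := bound_hi (Real.log |s|); simp only [hf]; linarith
  have hlb : ∀ s, 4 - Real.sqrt 10 ≤ f s := fun s => by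
    have := bound_lo (Real.log |s|); simp only [hf]; linarith
  have hBddAbove : IsBoundedUnder (· ≤ ·) (𝓝[≠] (0:ℝ)) f :=
    ⟨4 + Real.sqrt 10, eventually_map.mpr (Eventually.of_forall hub)⟩
  have hBddBelow : IsBoundedUnder (· ≥ ·) (𝓝[≠] (0:ℝ)) f :=
    ⟨4 - Real.sqrt 10, eventually_map.mpr (Eventually.of_forall hlb)⟩
  set θ := Real.arcsin (1 / Real.sqrt 10) with hθ
  -- frequently attains max value
  have hfreq_hi : ∃ᶠ s in 𝓝[≠] (0:ℝ), 4 + Real.sqrt 10 ≤ f s := by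
    apply (seq_tendsto θ).frequently
    apply Eventually.frequently
    apply Eventually.of_forall
    intro n
    have h := seq_val θ n
    simp only [hf, h.1, h.2]
    linarith [theta_val]
  have hfreq_lo : ∃ᶠ s in 𝓝[≠] (0:ℝ), f s ≤ 4 - Real.sqrt 10 := by
    apply (seq_tendsto (θ + Real.pi)).frequently
    apply Eventually.frequently
    apply Eventually.of_forall
    intro n
    have h := seq_val (θ + Real.pi) n
    simp only [hf, h.1, h.2, Real.sin_add_pi, Real.cos_add_pi]
    linarith [theta_val]
  constructor
  · apply le_antisymm
    · exact liminf_le_of_frequently_le hfreq_lo hBddBelow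
    · exact le_liminf_of_le hBddAbove.isCoboundedUnder_ge (Eventually.of_forall hlb)
  · apply le_antisymm
    · exact limsup_le_of_le hBddBelow.isCoboundedUnder_le (Eventually.of_forall hub)
    · exact le_limsup_of_frequently_le hfreq_hi hBddAbove
end

section
/- Define f₁ : ℝ² → ℝ by f₁(x) := 2x₁² + x₂² + x₂ + x₁² sin(ln|x₁|) if x₁ ≠ 0, and f₁(x) := x₂² + x₂ if x₁ = 0, and set f₂ := −f₁ (both are C^{1,1}). Let x⁰ := (0,0) and u := (1,0). Then f₁°°(x⁰; u, u) = 4 + √10 and f₂°°(x⁰; u, u) = −4 + √10. -/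
open Filter Topology Set
open scoped InnerProductSpace

noncomputable section

/-- The `C^{1,1}` function `f₁` of Example 4.1. -/
def f1 (x : EuclideanSpace ℝ (Fin 2)) : ℝ :=
  if x 0 = 0 then (x 1) ^ 2 + x 1
  else 2 * (x 0) ^ 2 + (x 1) ^ 2 + x 1 + (x 0) ^ 2 * Real.sin (Real.log |x 0|)

/-- `f₂ = −f₁`. -/
def f2 (x : EuclideanSpace ℝ (Fin 2)) : ℝ := -f1 x

namespace Ex41

/-! ### Scalar auxiliary functions -/

def Fs (s : ℝ) : ℝ := s ^ 2 * (2 + Real.sin (Real.log s))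

def g (s : ℝ) : ℝ := s * (4 + 2 * Real.sin (Real.log s) + Real.cos (Real.log s))

lemma g_zero : g 0 = 0 := by simp [g]

lemma hasDerivAt_g {s : ℝ} (hs : s ≠ 0) :
    HasDerivAt g (4 + Real.sin (Real.log s) + 3 * Real.cos (Real.log s)) s := by
  have hl : HasDerivAt Real.log s⁻¹ s := Real.hasDerivAt_log hs
  have hsin : HasDerivAt (fun t => Real.sin (Real.log t)) (Real.cos (Real.log s) * s⁻¹) s :=
    (Real.hasDerivAt_sin _).comp s hl
  have hcos : HasDerivAt (fun t => Real.cos (Real.log t)) (-Real.sin (Real.log s) * s⁻¹) s :=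
    (Real.hasDerivAt_cos _).comp s hl
  have h1 : HasDerivAt (fun t => 4 + 2 * Real.sin (Real.log t) + Real.cos (Real.log t))
      (0 + 2 * (Real.cos (Real.log s) * s⁻¹) + -Real.sin (Real.log s) * s⁻¹) s :=
    ((hasDerivAt_const s (4:ℝ)).add (hsin.const_mul 2)).add hcos
  have h2 := (hasDerivAt_id s).mul h1
  refine h2.congr_deriv ?_
  simp only [id]
  field_simp
  ring

lemma hasDerivAt_Fs (s : ℝ) : HasDerivAt Fs (g s) s := by
  rcases eq_or_ne s 0 with rfl | hs
  · rw [g_zero, hasDerivAt_iff_tendsto_slope]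
    have hev : ∀ᶠ t in 𝓝[≠] (0:ℝ), ‖slope Fs 0 t‖ ≤ 3 * |t| := by
      filter_upwards [self_mem_nhdsWithin] with t ht
      have ht' : (t:ℝ) ≠ 0 := ht
      have : slope Fs 0 t = t * (2 + Real.sin (Real.log t)) := by
        rw [slope_def_field, Fs]
        have : Fs 0 = 0 := by simp [Fs]
        rw [this]
        field_simp
        ring
      rw [this, Real.norm_eq_abs, abs_mul]
      have h1 : |2 + Real.sin (Real.log t)| ≤ 3 := by
        have := Real.neg_one_le_sin (Real.log t)
        have := Real.sin_le_one (Real.log t)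
        rw [abs_le]; constructor <;> linarith
      calc |t| * |2 + Real.sin (Real.log t)| ≤ |t| * 3 := by
            exact mul_le_mul_of_nonneg_left h1 (abs_nonneg t)
        _ = 3 * |t| := by ring
    have hlim : Tendsto (fun t : ℝ => 3 * |t|) (𝓝[≠] (0:ℝ)) (𝓝 0) := by
      have : Tendsto (fun t : ℝ => 3 * |t|) (𝓝 (0:ℝ)) (𝓝 (3 * |(0:ℝ)|)) := by
        exact (continuous_const.mul continuous_abs).tendsto 0
      simpa using this.mono_left nhdsWithin_le_nhds
    exact squeeze_zero_norm' hev hlim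
  · have h1 : HasDerivAt (fun t => 2 + Real.sin (Real.log t)) (0 + Real.cos (Real.log s) * s⁻¹) s :=
      (hasDerivAt_const s (2:ℝ)).add ((Real.hasDerivAt_sin _).comp s (Real.hasDerivAt_log hs))
    have h2 := (hasDerivAt_pow 2 s).mul h1
    refine h2.congr_deriv ?_
    simp only [g, Fs]
    field_simp
    ring

/-! ### Bounds on the derivative of `g` -/

lemma sincos_le (L : ℝ) : Real.sin L + 3 * Real.cos L ≤ Real.sqrt 10 := by
  have h1 := Real.sin_sq_add_cos_sq L
  have h2 : Real.sqrt 10 ^ 2 = 10 := Real.sq_sqrt (by norm_num)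
  have h3 := Real.sqrt_nonneg 10
  nlinarith [sq_nonneg (3 * Real.sin L - Real.cos L),
    sq_nonneg (Real.sin L + 3 * Real.cos L - Real.sqrt 10),
    sq_nonneg (Real.sin L + 3 * Real.cos L + Real.sqrt 10)]

lemma neg_le_sincos (L : ℝ) : -Real.sqrt 10 ≤ Real.sin L + 3 * Real.cos L := by
  have h1 := Real.sin_sq_add_cos_sq L
  have h2 : Real.sqrt 10 ^ 2 = 10 := Real.sq_sqrt (by norm_num)
  have h3 := Real.sqrt_nonneg 10
  nlinarith [sq_nonneg (3 * Real.sin L - Real.cos L),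
    sq_nonneg (Real.sin L + 3 * Real.cos L - Real.sqrt 10),
    sq_nonneg (Real.sin L + 3 * Real.cos L + Real.sqrt 10)]

lemma continuous_g : Continuous g := by
  rw [continuous_iff_continuousAt]
  intro s
  rcases eq_or_ne s 0 with rfl | hs
  · rw [ContinuousAt, g_zero]
    apply squeeze_zero_norm (a := fun t : ℝ => 7 * |t|)
    · intro t
      rw [g, Real.norm_eq_abs, abs_mul]
      have h1 : |4 + 2 * Real.sin (Real.log t) + Real.cos (Real.log t)| ≤ 7 := by
        have := Real.neg_one_le_sin (Real.log t)
        have := Real.sin_le_one (Real.log t)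
        have := Real.neg_one_le_cos (Real.log t)
        have := Real.cos_le_one (Real.log t)
        rw [abs_le]; constructor <;> linarith
      calc |t| * |4 + 2 * Real.sin (Real.log t) + Real.cos (Real.log t)| ≤ |t| * 7 :=
            mul_le_mul_of_nonneg_left h1 (abs_nonneg t)
        _ = 7 * |t| := by ring
    · have h7 : Tendsto (fun t : ℝ => 7 * |t|) (𝓝 0) (𝓝 (7 * |(0:ℝ)|)) :=
        (continuous_const.mul continuous_abs).tendsto (0:ℝ)
      simpa using h7
  · exact (hasDerivAt_g hs).continuousAt

/-- upper Lipschitz bound -/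
lemma g_sub_le {a b : ℝ} (hab : a ≤ b) : g b - g a ≤ (4 + Real.sqrt 10) * (b - a) := by
  set c := 4 + Real.sqrt 10 with hc
  have hderiv : ∀ s : ℝ, s ≠ 0 → HasDerivAt (fun t => c * t - g t)
      (c - (4 + Real.sin (Real.log s) + 3 * Real.cos (Real.log s))) s := by
    intro s hs
    exact (((hasDerivAt_id s).const_mul c).sub (hasDerivAt_g hs)).congr_deriv (by ring)
  have hnn : ∀ s : ℝ, s ≠ 0 → 0 ≤ deriv (fun t => c * t - g t) s := by
    intro s hs
    rw [(hderiv s hs).deriv]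
    have := sincos_le (Real.log s)
    simp only [hc]; linarith
  have hcont : Continuous (fun t => c * t - g t) :=
    (continuous_const.mul continuous_id).sub continuous_g
  have hmono1 : MonotoneOn (fun t => c * t - g t) (Ici (0:ℝ)) := by
    apply monotoneOn_of_deriv_nonneg (convex_Ici 0) hcont.continuousOn
    · intro x hx
      rw [interior_Ici] at hx
      exact ((hderiv x (ne_of_gt hx)).differentiableAt).differentiableWithinAt
    · intro x hx
      rw [interior_Ici] at hx
      exact hnn x (ne_of_gt hx)
  have hmono2 : MonotoneOn (fun t => c * t - g t) (Iic (0:ℝ)) := by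
    apply monotoneOn_of_deriv_nonneg (convex_Iic 0) hcont.continuousOn
    · intro x hx
      rw [interior_Iic] at hx
      exact ((hderiv x (ne_of_lt hx)).differentiableAt).differentiableWithinAt
    · intro x hx
      rw [interior_Iic] at hx
      exact hnn x (ne_of_lt hx)
  have key : ∀ x y : ℝ, x ≤ y → c * x - g x ≤ c * y - g y := by
    intro x y hxy
    rcases le_total 0 x with hx | hx
    · exact hmono1 hx (hx.trans hxy) hxy
    · rcases le_total y 0 with hy | hy
      · exact hmono2 (hxy.trans hy) hy hxy
      · calc c * x - g x ≤ c * 0 - g 0 := hmono2 hx (le_refl (0:ℝ) : (0:ℝ) ∈ Iic 0) hx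
          _ ≤ c * y - g y := hmono1 (le_refl (0:ℝ) : (0:ℝ) ∈ Ici 0) hy hy
  have := key a b hab
  linarith

lemma le_g_sub {a b : ℝ} (hab : a ≤ b) : (4 - Real.sqrt 10) * (b - a) ≤ g b - g a := by
  set c := 4 - Real.sqrt 10 with hc
  have hderiv : ∀ s : ℝ, s ≠ 0 → HasDerivAt (fun t => g t - c * t)
      ((4 + Real.sin (Real.log s) + 3 * Real.cos (Real.log s)) - c) s := by
    intro s hs
    exact ((hasDerivAt_g hs).sub ((hasDerivAt_id s).const_mul c)).congr_deriv (by ring)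
  have hnn : ∀ s : ℝ, s ≠ 0 → 0 ≤ deriv (fun t => g t - c * t) s := by
    intro s hs
    rw [(hderiv s hs).deriv]
    have := neg_le_sincos (Real.log s)
    simp only [hc]; linarith
  have hcont : Continuous (fun t => g t - c * t) :=
    continuous_g.sub (continuous_const.mul continuous_id)
  have hmono1 : MonotoneOn (fun t => g t - c * t) (Ici (0:ℝ)) := by
    apply monotoneOn_of_deriv_nonneg (convex_Ici 0) hcont.continuousOn
    · intro x hx
      rw [interior_Ici] at hx
      exact ((hderiv x (ne_of_gt hx)).differentiableAt).differentiableWithinAt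
    · intro x hx
      rw [interior_Ici] at hx
      exact hnn x (ne_of_gt hx)
  have hmono2 : MonotoneOn (fun t => g t - c * t) (Iic (0:ℝ)) := by
    apply monotoneOn_of_deriv_nonneg (convex_Iic 0) hcont.continuousOn
    · intro x hx
      rw [interior_Iic] at hx
      exact ((hderiv x (ne_of_lt hx)).differentiableAt).differentiableWithinAt
    · intro x hx
      rw [interior_Iic] at hx
      exact hnn x (ne_of_lt hx)
  have key : ∀ x y : ℝ, x ≤ y → g x - c * x ≤ g y - c * y := by
    intro x y hxy
    rcases le_total 0 x with hx | hx
    · exact hmono1 hx (hx.trans hxy) hxy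
    · rcases le_total y 0 with hy | hy
      · exact hmono2 (hxy.trans hy) hy hxy
      · calc g x - c * x ≤ g 0 - c * 0 := hmono2 hx (le_refl (0:ℝ) : (0:ℝ) ∈ Iic 0) hx
          _ ≤ g y - c * y := hmono1 (le_refl (0:ℝ) : (0:ℝ) ∈ Ici 0) hy hy
  have := key a b hab
  linarith

lemma quot_le {a t : ℝ} (ht : 0 < t) : (g (a + t) - g a) / t ≤ 4 + Real.sqrt 10 := by
  rw [div_le_iff₀ ht]
  have := g_sub_le (a := a) (b := a + t) (by linarith)
  simpa using this.trans_eq (by ring)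

lemma le_quot {a t : ℝ} (ht : 0 < t) : 4 - Real.sqrt 10 ≤ (g (a + t) - g a) / t := by
  rw [le_div_iff₀ ht]
  have := le_g_sub (a := a) (b := a + t) (by linarith)
  calc (4 - Real.sqrt 10) * t = (4 - Real.sqrt 10) * (a + t - a) := by ring
    _ ≤ g (a + t) - g a := this

/-! ### Values of `sin + 3 cos` at special angles -/

lemma val_max : Real.sin (Real.arctan (1/3)) + 3 * Real.cos (Real.arctan (1/3)) = Real.sqrt 10 := by
  rw [Real.sin_arctan, Real.cos_arctan]
  have h2 : Real.sqrt 10 ^ 2 = 10 := Real.sq_sqrt (by norm_num)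
  have h9 : Real.sqrt (1 + (1/3:ℝ)^2) = Real.sqrt 10 / 3 := by
    rw [show (1 + (1/3:ℝ)^2) = (Real.sqrt 10 / 3)^2 by nlinarith [h2]]
    exact Real.sqrt_sq (by positivity)
  have h10 : Real.sqrt 10 > 0 := by positivity
  rw [h9]
  field_simp
  nlinarith [h2]

lemma val_min : Real.sin (Real.arctan (1/3) + Real.pi)
    + 3 * Real.cos (Real.arctan (1/3) + Real.pi) = -Real.sqrt 10 := by
  rw [Real.sin_add_pi, Real.cos_add_pi]
  have := val_max
  linarith

/-! ### Euclidean-space plumbing -/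

abbrev E2 := EuclideanSpace ℝ (Fin 2)

def uu : E2 := (WithLp.equiv 2 (Fin 2 → ℝ)).symm ![1, 0]

lemma coord_add (x : E2) (t : ℝ) : (x + t • uu) 0 = x 0 + t := by
  simp [uu, PiLp.add_apply, PiLp.smul_apply]

lemma f1_eq (x : E2) : f1 x = Fs (x 0) + ((x 1) ^ 2 + x 1) := by
  rw [f1, Fs]
  split_ifs with h
  · rw [h]; ring
  · rw [Real.log_abs]; ring

lemma hasFDerivAt_f1 (x : E2) :
    HasFDerivAt f1
      (g (x 0) • (EuclideanSpace.proj (0 : Fin 2) : E2 →L[ℝ] ℝ)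
        + (2 * x 1 + 1) • (EuclideanSpace.proj (1 : Fin 2) : E2 →L[ℝ] ℝ)) x := by
  have hf : f1 = fun x : E2 => Fs (x 0) + ((x 1) ^ 2 + x 1) := funext f1_eq
  rw [hf]
  have hp0 : HasFDerivAt (fun x : E2 => x 0)
      (EuclideanSpace.proj (0 : Fin 2) : E2 →L[ℝ] ℝ) x := by
    exact (EuclideanSpace.proj (0 : Fin 2) : E2 →L[ℝ] ℝ).hasFDerivAt
  have hp1 : HasFDerivAt (fun x : E2 => x 1)
      (EuclideanSpace.proj (1 : Fin 2) : E2 →L[ℝ] ℝ) x := by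
    exact (EuclideanSpace.proj (1 : Fin 2) : E2 →L[ℝ] ℝ).hasFDerivAt
  have h0 : HasFDerivAt (fun x : E2 => Fs (x 0))
      (g (x 0) • (EuclideanSpace.proj (0 : Fin 2) : E2 →L[ℝ] ℝ)) x :=
    HasDerivAt.comp_hasFDerivAt (h₂ := Fs) x (hasDerivAt_Fs (x 0)) hp0
  have hq : HasDerivAt (fun t : ℝ => t ^ 2 + t) (2 * x 1 + 1) (x 1) := by
    have := (hasDerivAt_pow 2 (x 1)).add (hasDerivAt_id (x 1))
    exact this.congr_deriv (by norm_num)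
  have h1 : HasFDerivAt (fun x : E2 => (x 1) ^ 2 + x 1)
      ((2 * x 1 + 1) • (EuclideanSpace.proj (1 : Fin 2) : E2 →L[ℝ] ℝ)) x :=
    HasDerivAt.comp_hasFDerivAt (h₂ := fun t : ℝ => t ^ 2 + t) x hq hp1
  exact h0.add h1

lemma inner_grad_f1 (x : E2) : ⟪gradient f1 x, uu⟫_ℝ = g (x 0) := by
  rw [gradient, InnerProductSpace.toDual_symm_apply, (hasFDerivAt_f1 x).fderiv]
  simp [uu]

lemma inner_grad_f2 (x : E2) : ⟪gradient f2 x, uu⟫_ℝ = -g (x 0) := by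
  have h : HasFDerivAt f2
      (-(g (x 0) • (EuclideanSpace.proj (0 : Fin 2) : E2 →L[ℝ] ℝ)
        + (2 * x 1 + 1) • (EuclideanSpace.proj (1 : Fin 2) : E2 →L[ℝ] ℝ))) x :=
    (hasFDerivAt_f1 x).neg
  rw [gradient, InnerProductSpace.toDual_symm_apply, h.fderiv]
  simp [uu]

/-! ### The frequently lemma -/

lemma freq (θ : ℝ) (P : ℝ → Prop)
    (hP : ∀ᶠ y in 𝓝 (4 + Real.sin θ + 3 * Real.cos θ), P y) :
    ∃ᶠ p : E2 × ℝ in (𝓝 (0 : E2)) ×ˢ (𝓝[>] (0:ℝ)),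
      P ((g (p.1 0 + p.2) - g (p.1 0)) / p.2) := by
  rw [Filter.frequently_iff]
  intro S hS
  obtain ⟨U, hU, V, hV, hUV⟩ := Filter.mem_prod_iff.mp hS
  set sn : ℕ → ℝ := fun n => Real.exp (θ - (n + 1) * (2 * Real.pi)) with hsn
  have hsn_tend : Tendsto sn atTop (𝓝 0) := by
    apply Real.tendsto_exp_atBot.comp
    apply tendsto_atBot_add_const_left
    have h1 : Tendsto (fun n : ℕ => ((n : ℝ) + 1) * (2 * Real.pi)) atTop atTop :=
      Tendsto.atTop_mul_const (by positivity)
        (tendsto_atTop_add_const_right _ _ tendsto_natCast_atTop_atTop)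
    exact tendsto_neg_atTop_atBot.comp h1
  have hι_tend : Tendsto (fun n : ℕ => ((sn n) • uu : E2)) atTop (𝓝 0) := by
    have hc : Continuous (fun s : ℝ => (s • uu : E2)) := continuous_id.smul continuous_const
    have := (hc.tendsto 0).comp hsn_tend
    simpa [Function.comp_def] using this
  obtain ⟨n, hnU⟩ := (hι_tend.eventually_mem hU).exists
  set s := sn n with hs
  have hs_pos : 0 < s := Real.exp_pos _
  have hlog : Real.log s = θ + ((-(n+1) : ℤ) : ℝ) * (2 * Real.pi) := by
    rw [hs, hsn, Real.log_exp]
    push_cast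
    ring
  have hsin : Real.sin (Real.log s) = Real.sin θ := by
    rw [hlog, Real.sin_add_int_mul_two_pi]
  have hcos : Real.cos (Real.log s) = Real.cos θ := by
    rw [hlog, Real.cos_add_int_mul_two_pi]
  have hd : HasDerivAt g (4 + Real.sin θ + 3 * Real.cos θ) s := by
    have := hasDerivAt_g (ne_of_gt hs_pos)
    rwa [hsin, hcos] at this
  have hmap : Tendsto (fun t : ℝ => s + t) (𝓝[>] (0:ℝ)) (𝓝[≠] s) := by
    apply tendsto_nhdsWithin_of_tendsto_nhds_of_eventually_within
    · have : Tendsto (fun t : ℝ => s + t) (𝓝 (0:ℝ)) (𝓝 (s + 0)) :=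
        (continuous_const.add continuous_id).tendsto 0
      simpa using this.mono_left nhdsWithin_le_nhds
    · filter_upwards [self_mem_nhdsWithin] with t ht
      have : (0:ℝ) < t := ht
      simp only [mem_compl_iff, mem_singleton_iff]
      intro h
      nlinarith [congrArg (· - s) h]
  have hslope := (hasDerivAt_iff_tendsto_slope.mp hd).comp hmap
  have hquot : Tendsto (fun t : ℝ => (g (s + t) - g s) / t) (𝓝[>] (0:ℝ))
      (𝓝 (4 + Real.sin θ + 3 * Real.cos θ)) := by
    apply hslope.congr'
    filter_upwards [self_mem_nhdsWithin] with t ht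
    have ht' : (0:ℝ) < t := ht
    simp only [Function.comp_apply, slope_def_field]
    rw [add_sub_cancel_left]
  have hPq : ∀ᶠ t in 𝓝[>] (0:ℝ), P ((g (s + t) - g s) / t) := hquot.eventually hP
  obtain ⟨t, htV, htP⟩ := (Filter.nonempty_of_mem (Filter.inter_mem hV hPq))
  refine ⟨(s • uu, t), hUV ⟨hnU, htV⟩, ?_⟩
  have hcoord : ((s • uu : E2)) 0 = s := by simp [uu]
  simpa [hcoord] using htP

end Ex41

open Ex41

/-- Example 4.1: the values of `f₁°°(x⁰; u, u)` and `f₂°°(x⁰; u, u)` at `x⁰ = (0,0)`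
in the direction `u = (1,0)`. -/
theorem stmt_16 :
    secondDD f1 (0 : EuclideanSpace ℝ (Fin 2))
        ((WithLp.equiv 2 (Fin 2 → ℝ)).symm ![1, 0]) = 4 + Real.sqrt 10 ∧
    secondDD f2 (0 : EuclideanSpace ℝ (Fin 2))
        ((WithLp.equiv 2 (Fin 2 → ℝ)).symm ![1, 0]) = -4 + Real.sqrt 10 := by
  have huu : ((WithLp.equiv 2 (Fin 2 → ℝ)).symm ![1, 0]) = uu := rfl
  set L := (𝓝 (0 : E2)) ×ˢ (𝓝[>] (0:ℝ)) with hL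
  have hpos' : ∀ᶠ t in 𝓝[>] (0:ℝ), (0:ℝ) < t := by
    filter_upwards [self_mem_nhdsWithin] with t ht
    exact ht
  have hpos : ∀ᶠ p : E2 × ℝ in L, 0 < p.2 := hpos'.prod_inr _
  have hvmax : 4 + Real.sin (Real.arctan (1/3)) + 3 * Real.cos (Real.arctan (1/3))
      = 4 + Real.sqrt 10 := by have := val_max; linarith
  have hvmin : 4 + Real.sin (Real.arctan (1/3) + Real.pi)
      + 3 * Real.cos (Real.arctan (1/3) + Real.pi) = 4 - Real.sqrt 10 := by
    have := val_min; linarith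
  constructor
  · -- f1
    have heq : secondDD f1 (0 : E2) uu
        = Filter.limsup (fun p : E2 × ℝ => (g (p.1 0 + p.2) - g (p.1 0)) / p.2) L := by
      rw [secondDD]
      congr 1
      funext p
      rw [inner_grad_f1, inner_grad_f1, coord_add]
    rw [huu, heq]
    have hub : ∀ᶠ p : E2 × ℝ in L,
        (g (p.1 0 + p.2) - g (p.1 0)) / p.2 ≤ 4 + Real.sqrt 10 :=
      hpos.mono fun p hp => quot_le hp
    have hlb : ∀ᶠ p : E2 × ℝ in L,
        4 - Real.sqrt 10 ≤ (g (p.1 0 + p.2) - g (p.1 0)) / p.2 :=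
      hpos.mono fun p hp => le_quot hp
    apply le_antisymm
    · exact Filter.limsup_le_of_le (Filter.IsBoundedUnder.isCoboundedUnder_le ⟨4 - Real.sqrt 10, eventually_map.mpr hlb⟩) hub
    · apply le_of_forall_lt_imp_le_of_dense
      intro b hb
      have hP : ∀ᶠ y in 𝓝 (4 + Real.sin (Real.arctan (1/3))
          + 3 * Real.cos (Real.arctan (1/3))), b ≤ y := by
        rw [hvmax]; exact eventually_ge_nhds hb
      exact Filter.le_limsup_of_frequently_le (freq _ _ hP) ⟨4 + Real.sqrt 10, eventually_map.mpr hub⟩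
  · -- f2
    have heq : secondDD f2 (0 : E2) uu
        = Filter.limsup (fun p : E2 × ℝ => -((g (p.1 0 + p.2) - g (p.1 0)) / p.2)) L := by
      rw [secondDD]
      congr 1
      funext p
      rw [inner_grad_f2, inner_grad_f2, coord_add]
      ring
    rw [huu, heq]
    have hub : ∀ᶠ p : E2 × ℝ in L,
        -((g (p.1 0 + p.2) - g (p.1 0)) / p.2) ≤ -4 + Real.sqrt 10 :=
      hpos.mono fun p hp => by have := le_quot (a := p.1 0) hp; linarith
    have hlb : ∀ᶠ p : E2 × ℝ in L,
        -4 - Real.sqrt 10 ≤ -((g (p.1 0 + p.2) - g (p.1 0)) / p.2) :=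
      hpos.mono fun p hp => by have := quot_le (a := p.1 0) hp; linarith
    apply le_antisymm
    · exact Filter.limsup_le_of_le (Filter.IsBoundedUnder.isCoboundedUnder_le ⟨-4 - Real.sqrt 10, eventually_map.mpr hlb⟩) hub
    · apply le_of_forall_lt_imp_le_of_dense
      intro b hb
      have hP : ∀ᶠ y in 𝓝 (4 + Real.sin (Real.arctan (1/3) + Real.pi)
          + 3 * Real.cos (Real.arctan (1/3) + Real.pi)), b ≤ -y := by
        rw [hvmin]
        have h1 : ∀ᶠ y in 𝓝 (4 - Real.sqrt 10), y ≤ -b := eventually_le_nhds (by linarith)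
        exact h1.mono fun y hy => by linarith
      have hfr := freq (Real.arctan (1/3) + Real.pi) (fun y => b ≤ -y) hP
      exact Filter.le_limsup_of_frequently_le hfr ⟨-4 + Real.sqrt 10, eventually_map.mpr hub⟩
end
end
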